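/- Every edge of G whose colour lies in R has at least one endpoint in T(V_reach) ∪ (V(M) ∖ V_reach), where T(V_reach) is the set of twins of vertices of V_reach. -/

import Mathlib

/-
A multigraph on vertex type `V` is given by an edge type `E` with two endpoint
maps `fst snd : E → V` (no loops: `fst e ≠ snd e`); parallel edges are allowed
since distinct elements of `E` may have the same endpoints.  A colouring
`col : E → C` by a set `C` of `n` colours is proper if any two distinct edges
sharing a vertex get distinct colours.
-/

attribute [local instance] Classical.propDecidable

/-- The set of endpoints of an edge. -/
def endpts {V E : Type*} [DecidableEq V] (fst snd : E → V) (e : E) : Finset V :=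
  {fst e, snd e}

/-- A set of edges is a rainbow matching: pairwise vertex-disjoint edges with
pairwise distinct colours. -/
def IsRainbowMatching {V E C : Type*} [DecidableEq V] (fst snd : E → V) (col : E → C)
    (S : Finset E) : Prop :=
  (∀ e ∈ S, ∀ f ∈ S, e ≠ f → endpts fst snd e ∩ endpts fst snd f = ∅) ∧
  (∀ e ∈ S, ∀ f ∈ S, col e = col f → e = f)

/-- `V(M)`: the set of vertices covered by a set of edges `M`. -/
def mVerts {V E : Type*} [DecidableEq V] (fst snd : E → V) (M : Finset E) : Finset V :=
  M.biUnion (endpts fst snd)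

/-- The set of colours used by a set of edges `M`. -/
def mCols {E C : Type*} [DecidableEq C] (col : E → C) (M : Finset E) : Finset C :=
  M.image col

/-- `C₀`: the set of colours not used by `M`. -/
def C0 {E C : Type*} [Fintype C] [DecidableEq C] (col : E → C) (M : Finset E) : Finset C :=
  Finset.univ \ mCols col M

/-- An edge is external if one endpoint is in `V(M)` and the other is outside `V(M)`. -/
def IsExternal {V E : Type*} [DecidableEq V] (fst snd : E → V) (M : Finset E) (e : E) : Prop :=
  (fst e ∈ mVerts fst snd M ∧ snd e ∉ mVerts fst snd M) ∨
  (fst e ∉ mVerts fst snd M ∧ snd e ∈ mVerts fst snd M)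

/-- The number of external `C₀`-edges incident to a vertex `v`. -/
noncomputable def extC0deg {V E C : Type*} [DecidableEq V] [Fintype E] [Fintype C]
    [DecidableEq C] (fst snd : E → V) (col : E → C) (M : Finset E) (v : V) : ℕ :=
  (Finset.univ.filter fun f : E =>
    IsExternal fst snd M f ∧ col f ∈ C0 col M ∧ v ∈ endpts fst snd f).card

/-- `E₀`: the edges of `M` having an endpoint (a possible tail) incident to at least
`α|C₀|` external `C₀`-edges. -/
noncomputable def E0 {V E C : Type*} [DecidableEq V] [Fintype E] [Fintype C] [DecidableEq C]
    (fst snd : E → V) (col : E → C) (M : Finset E) (α : ℝ) : Finset E :=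
  M.filter fun e => ∃ v ∈ endpts fst snd e,
    α * ((C0 col M).card : ℝ) ≤ (extC0deg fst snd col M v : ℝ)

/-- `F`: the set of flexible colours, i.e. the colours of the edges of `E₀`. -/
noncomputable def Fcols {V E C : Type*} [DecidableEq V] [Fintype E] [Fintype C] [DecidableEq C]
    (fst snd : E → V) (col : E → C) (M : Finset E) (α : ℝ) : Finset C :=
  mCols col (E0 fst snd col M α)

/-- A good external edge: an external edge `e` whose colour lies in `F` such that the
edge `m_{c(e)}` of `M` of the same colour is incident to at least `α|C₀|/2` external
`C₀`-edges sharing no endpoint with `e`. -/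
noncomputable def IsGood {V E C : Type*} [DecidableEq V] [Fintype E] [Fintype C] [DecidableEq C]
    (fst snd : E → V) (col : E → C) (M : Finset E) (α : ℝ) (e : E) : Prop :=
  IsExternal fst snd M e ∧ col e ∈ Fcols fst snd col M α ∧
  ∃ g ∈ M, col g = col e ∧
    α * ((C0 col M).card : ℝ) / 2 ≤
      ((Finset.univ.filter fun f : E => IsExternal fst snd M f ∧ col f ∈ C0 col M ∧
        (endpts fst snd f ∩ endpts fst snd g).Nonempty ∧
        endpts fst snd f ∩ endpts fst snd e = ∅).card : ℝ)

/-- The number of good external `F`-edges incident to a vertex `v`. -/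
noncomputable def goodDeg {V E C : Type*} [DecidableEq V] [Fintype E] [Fintype C] [DecidableEq C]
    (fst snd : E → V) (col : E → C) (M : Finset E) (α : ℝ) (v : V) : ℕ :=
  (Finset.univ.filter fun f : E => IsGood fst snd col M α f ∧ v ∈ endpts fst snd f).card

/-- `E₁`: the edges of `M` having an endpoint (a possible tail) incident to at least
`α|F|` good external `F`-edges. -/
noncomputable def E1 {V E C : Type*} [DecidableEq V] [Fintype E] [Fintype C] [DecidableEq C]
    (fst snd : E → V) (col : E → C) (M : Finset E) (α : ℝ) : Finset E :=
  M.filter fun e => ∃ v ∈ endpts fst snd e,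
    α * ((Fcols fst snd col M α).card : ℝ) ≤ (goodDeg fst snd col M α v : ℝ)

/-- Given a choice `tl` of tail for each edge, the corresponding head. -/
def hdOf {V E : Type*} [DecidableEq V] (fst snd : E → V) (tl : E → V) (e : E) : V :=
  if tl e = fst e then snd e else fst e

/-- The endpoint of the edge `f` other than `v` (for `v` an endpoint of `f`). -/
def other {V E : Type*} [DecidableEq V] (fst snd : E → V) (v : V) (f : E) : V :=
  if fst f = v then snd f else fst f

/-- The condition for a vertex `v` to be a possible tail at step `i > 1` of the
reachability algorithm: for some `0 < j < i`, the number of `R_j`-edges `v u` with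
`u ∈ V₀ ∪ V₁ ∪ ⋯ ∪ V_{i-1}` is at least `α|R_j|`. -/
noncomputable def reachCond {V E C : Type*} [DecidableEq V] [Fintype V] [Fintype E] [Fintype C]
    [DecidableEq C] (fst snd : E → V) (col : E → C) (M : Finset E)
    (Vs : ℕ → Finset V) (Rs : ℕ → Finset C) (α : ℝ) (i : ℕ) (v : V) : Prop :=
  ∃ j ∈ Finset.Ioo 0 i, α * ((Rs j).card : ℝ) ≤
    ((Finset.univ.filter fun f : E => v ∈ endpts fst snd f ∧ col f ∈ Rs j ∧
      other fst snd v f ∈ (Finset.univ \ mVerts fst snd M) ∪ (Finset.Ioo 0 i).biUnion Vs).card : ℝ)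

/-- The set `T(S)` of twins (matching partners under `M`) of the vertices of `S`. -/
def twins {V E : Type*} [DecidableEq V] (fst snd : E → V) (M : Finset E) (S : Finset V) :
    Finset V :=
  M.biUnion fun g => (if fst g ∈ S then {snd g} else ∅) ∪ (if snd g ∈ S then {fst g} else ∅)


/-! ### Auxiliary lemmas -/

set_option linter.unusedSectionVars false

section AuxBasic

variable {V E C : Type*} [DecidableEq V] [DecidableEq E] [DecidableEq C] [Fintype C]
variable {fst snd : E → V} {col : E → C} {M : Finset E}

lemma mem_endpts_iff {f : E} {v : V} : v ∈ endpts fst snd f ↔ v = fst f ∨ v = snd f := by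
  simp [endpts]

lemma fst_mem_endpts (f : E) : fst f ∈ endpts fst snd f := by simp [endpts]

lemma snd_mem_endpts (f : E) : snd f ∈ endpts fst snd f := by simp [endpts]

lemma endpts_card (hloop : ∀ e : E, fst e ≠ snd e) (f : E) :
    (endpts fst snd f).card = 2 := by
  simp only [endpts]
  rw [Finset.card_insert_of_notMem (by simp [hloop f]), Finset.card_singleton]

lemma other_mem {f : E} {v : V} : other fst snd v f ∈ endpts fst snd f := by
  unfold other; split <;> simp [endpts]

lemma other_ne (hloop : ∀ e : E, fst e ≠ snd e) {f : E} {v : V}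
    (hv : v ∈ endpts fst snd f) : other fst snd v f ≠ v := by
  by_cases hc : fst f = v
  · rw [other, if_pos hc, ← hc]
    exact fun h2 => hloop f h2.symm
  · rw [other, if_neg hc]
    rcases mem_endpts_iff.1 hv with h | h
    · exact absurd h.symm hc
    · rw [h]; exact hloop f

lemma endpts_eq_pair {f : E} {v : V} (hv : v ∈ endpts fst snd f) :
    endpts fst snd f = {v, other fst snd v f} := by
  by_cases hc : fst f = v
  · rw [other, if_pos hc, ← hc]; rfl
  · rw [other, if_neg hc]
    rcases mem_endpts_iff.1 hv with h | h
    · exact absurd h.symm hc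
    · rw [h]; exact Finset.pair_comm (fst f) (snd f)

lemma mem_endpts_cases {f : E} {v w : V} (hv : v ∈ endpts fst snd f)
    (hw : w ∈ endpts fst snd f) : w = v ∨ w = other fst snd v f := by
  rw [endpts_eq_pair hv] at hw
  simpa using hw

lemma hdOf_mem_endpts (tl : E → V) (g : E) : hdOf fst snd tl g ∈ endpts fst snd g := by
  unfold hdOf; split <;> simp [endpts]

lemma tl_mem_endpts {tl : E → V} (htl : ∀ e : E, tl e = fst e ∨ tl e = snd e) (g : E) :
    tl g ∈ endpts fst snd g := by
  rcases htl g with h | h <;> rw [h] <;> simp [endpts]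

lemma hdOf_ne_tl (hloop : ∀ e : E, fst e ≠ snd e) {tl : E → V}
    (htl : ∀ e : E, tl e = fst e ∨ tl e = snd e) (g : E) :
    hdOf fst snd tl g ≠ tl g := by
  by_cases h : tl g = fst g
  · rw [hdOf, if_pos h, h]
    exact fun hc => hloop g hc.symm
  · rw [hdOf, if_neg h]
    rcases htl g with h' | h'
    · exact absurd h' h
    · rw [h']; exact hloop g

lemma mem_mVerts {S : Finset E} {v : V} :
    v ∈ mVerts fst snd S ↔ ∃ g ∈ S, v ∈ endpts fst snd g := by
  simp [mVerts]

lemma endpts_subset_mVerts {S : Finset E} {g : E} (hg : g ∈ S) :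
    endpts fst snd g ⊆ mVerts fst snd S :=
  fun v hv => mem_mVerts.2 ⟨g, hg, hv⟩

/-- In a matching, an edge is determined by any of its vertices. -/
lemma match_unique (hM : IsRainbowMatching fst snd col M) {g h : E}
    (hg : g ∈ M) (hh : h ∈ M) {v : V} (hvg : v ∈ endpts fst snd g)
    (hvh : v ∈ endpts fst snd h) : g = h := by
  by_contra hne
  have := hM.1 g hg h hh hne
  have : v ∈ endpts fst snd g ∩ endpts fst snd h := Finset.mem_inter.2 ⟨hvg, hvh⟩
  rw [hM.1 g hg h hh hne] at this
  exact absurd this (Finset.notMem_empty v)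

lemma col_notin_C0 {g : E} (hg : g ∈ M) : col g ∉ C0 col M := by
  simp only [C0, Finset.mem_sdiff, Finset.mem_univ, true_and, not_not, mCols]
  exact Finset.mem_image_of_mem col hg

lemma mem_C0_not_col {c : C} (hc : c ∈ C0 col M) {g : E} (hg : g ∈ M) : col g ≠ c := by
  intro h; exact col_notin_C0 hg (h ▸ hc)

/-- The unique matching edge with a given used colour. -/
lemma col_match_unique (hM : IsRainbowMatching fst snd col M) {g h : E}
    (hg : g ∈ M) (hh : h ∈ M) (hcol : col g = col h) : g = h :=
  hM.2 g hg h hh hcol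

end AuxBasic


section AuxNum

lemma pow16_le_rpow_two {x : ℝ} (hx : 0 ≤ x) : (x/24)^16 ≤ (2:ℝ)^x := by
  have hlt : (0.6931471803:ℝ) < Real.log 2 := Real.log_two_gt_d9
  have h1 : x/24 ≤ Real.log 2 * x / 16 + 1 := by nlinarith
  have h2 : Real.log 2 * x / 16 + 1 ≤ Real.exp (Real.log 2 * x / 16) :=
    Real.add_one_le_exp _
  have h3 : (x/24)^16 ≤ (Real.exp (Real.log 2 * x / 16))^16 :=
    pow_le_pow_left₀ (by positivity) (h1.trans h2) 16
  calc (x/24)^16 ≤ (Real.exp (Real.log 2 * x/16))^16 := h3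
    _ = Real.exp ((16:ℕ) * (Real.log 2 * x/16)) := by rw [Real.exp_nat_mul]
    _ = Real.exp (Real.log 2 * x) := by congr 1; push_cast; ring
    _ = (2:ℝ)^x := by rw [Real.rpow_def_of_pos (by norm_num)]

lemma three_le_rpow : (3:ℝ) ≤ (2:ℝ) ^ ((13:ℝ)/8) := by
  have h8 : ((3:ℝ))^(8:ℕ) ≤ ((2:ℝ) ^ ((13:ℝ)/8))^(8:ℕ) := by
    have : ((2:ℝ) ^ ((13:ℝ)/8))^(8:ℕ) = (2:ℝ)^((13:ℝ)) := by
      rw [← Real.rpow_natCast ((2:ℝ) ^ ((13:ℝ)/8)) 8, ← Real.rpow_mul (by norm_num)]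
      norm_num
    rw [this]
    have : (2:ℝ)^((13:ℝ)) = ((2:ℝ))^((13:ℕ)) := by
      rw [← Real.rpow_natCast 2 13]; norm_num
    rw [this]; norm_num
  have := pow_le_pow_iff_left₀ (by norm_num : (0:ℝ) ≤ 3)
    (by positivity : (0:ℝ) ≤ (2:ℝ) ^ ((13:ℝ)/8)) (by norm_num : 8 ≠ 0)
  exact this.1 h8

set_option maxHeartbeats 1000000 in
lemma numFacts (ε k α : ℝ) (hε0 : 0 < ε) (hε1 : ε < 1/1000)
    (hk : k = (2:ℝ) ^ (20/ε)) (hα : α = ε/12) (n : ℕ) (hn : (n:ℝ) > k^2)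
    (m : ℕ) (hm : (m:ℝ) * α ≤ 1) :
    0 < α ∧ α ≤ 1 ∧ 0 < k ∧ 1 ≤ k ∧ k ≤ n ∧ 1 ≤ (n:ℝ)/k ∧ k ≤ (n:ℝ)/k ∧
    8 ≤ α^2*k ∧ 8 ≤ α^2*n ∧
    2*(α^3*k/100) + 2 ≤ α*k/4 ∧
    2 + 12*(3:ℝ)^m ≤ α^3*k/100 ∧
    ((α^3*k/100)+1) + (α^3*k/100)*((n:ℝ)/k) + ((α^3*k/100)+1)*((n:ℝ)/k) < α^2*n ∧
    ((α^3*k/100)+1) + (α^3*k/100)*((n:ℝ)/k) + 8*(α^3*k/100)*(n:ℝ)/(α*k) < 5*(α^2*n) := by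
  set u : ℝ := 1/ε with hu
  have hu1000 : (1000:ℝ) < u := by
    rw [hu, lt_div_iff₀ hε0]; nlinarith
  have hupos : 0 < u := by linarith
  have hαu : α * (12*u) = 1 := by
    rw [hα, hu]; field_simp
  have hαpos : 0 < α := by rw [hα]; linarith
  have hα1 : α ≤ 1 := by nlinarith
  have hαne : α ≠ 0 := hαpos.ne'
  -- k bounds
  have hkpos : 0 < k := by rw [hk]; positivity
  have hkne : k ≠ 0 := hkpos.ne'
  have h20u : 20/ε = 20*u := by rw [hu]; ring
  have hrmono : ∀ {a b : ℝ}, a ≤ b → (2:ℝ)^a ≤ (2:ℝ)^b := fun h =>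
    Real.rpow_le_rpow_of_exponent_le one_le_two h
  have h2u_le_k : (2:ℝ)^u ≤ k := by
    rw [hk, h20u]; exact hrmono (by nlinarith)
  have hk1 : (1:ℝ) ≤ k := by
    calc (1:ℝ) = (2:ℝ)^(0:ℝ) := by norm_num
    _ ≤ (2:ℝ)^u := hrmono (by linarith)
    _ ≤ k := h2u_le_k
  have hkn : k ≤ (n:ℝ) := by nlinarith
  have hnpos : (0:ℝ) < n := by nlinarith
  have hnk1 : 1 ≤ (n:ℝ)/k := (le_div_iff₀ hkpos).2 (by nlinarith)
  have hknk : k ≤ (n:ℝ)/k := (le_div_iff₀ hkpos).2 (by nlinarith)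
  -- α²k ≥ 8 :  k ≥ 1152 u²
  have hP2 : (u/24)^16 ≤ (2:ℝ)^u := pow16_le_rpow_two hupos.le
  have hu14 : (1000:ℝ)^14 ≤ u^14 := pow_le_pow_left₀ (by norm_num) hu1000.le 14
  have hP3 : 1152*u^2 ≤ (u/24)^16 := by
    have h16 : (u/24)^16 = u^2*u^14/24^16 := by rw [div_pow]; ring
    rw [h16, le_div_iff₀ (by positivity)]
    calc 1152*u^2*(24:ℝ)^16 = u^2 * ((1152:ℝ)*24^16) := by ring
    _ ≤ u^2 * (1000:ℝ)^14 := mul_le_mul_of_nonneg_left (by norm_num) (sq_nonneg u)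
    _ ≤ u^2 * u^14 := mul_le_mul_of_nonneg_left hu14 (sq_nonneg u)
  have hk_u2 : 1152*u^2 ≤ k := le_trans hP3 (le_trans hP2 h2u_le_k)
  have hsq : α^2*(144*u^2) = 1 := by
    calc α^2*(144*u^2) = (α*(12*u))^2 := by ring
    _ = 1 := by rw [hαu]; norm_num
  have hα2k : 8 ≤ α^2*k := by
    have h5 := mul_le_mul_of_nonneg_left hk_u2 (sq_nonneg α)
    have h6 : α^2*(1152*u^2) = 8 := by linear_combination 8*hsq
    linarith
  have hα2n : 8 ≤ α^2*(n:ℝ) := by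
    have h5 := mul_le_mul_of_nonneg_left hkn (sq_nonneg α)
    linarith
  -- αk large
  have hαk : 96000 ≤ α*k := by
    have h5 := mul_le_mul_of_nonneg_left hk_u2 hαpos.le
    have h6 : α*(1152*u^2) = 96*u*(α*(12*u)) := by ring
    rw [hαu] at h6
    nlinarith
  have hα2le1 : α^2 ≤ 1 := by
    have := pow_le_pow_left₀ hαpos.le hα1 2
    simpa using this
  have hN3 : 2*(α^3*k/100) + 2 ≤ α*k/4 := by
    have hrw : α^3*k = α^2*(α*k) := by ring
    have hb : α^2*(α*k) ≤ 1*(α*k) :=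
      mul_le_mul_of_nonneg_right hα2le1 (by nlinarith)
    rw [hrw]
    linarith
  -- num8 : 2 + 12·3^m ≤ α³k/100
  have hm12u : (m:ℝ) ≤ 12*u := by
    by_contra h
    push_neg at h
    have := mul_lt_mul_of_pos_right h hαpos
    nlinarith
  have h3m : (3:ℝ)^m ≤ (2:ℝ)^((13:ℝ)/8 * m) := by
    calc (3:ℝ)^m ≤ ((2:ℝ) ^ ((13:ℝ)/8))^m := pow_le_pow_left₀ (by norm_num) three_le_rpow m
    _ = (2:ℝ)^((13:ℝ)/8 * m) := by
        rw [← Real.rpow_natCast ((2:ℝ) ^ ((13:ℝ)/8)) m, ← Real.rpow_mul (by norm_num)]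
  have h3m2 : (3:ℝ)^m ≤ (2:ℝ)^(19.5*u) := by
    refine h3m.trans (hrmono ?_)
    nlinarith
  have hP4 : 2419200*u^3 ≤ (2:ℝ)^(u/2) := by
    have h1 : ((u/2)/24)^16 ≤ (2:ℝ)^(u/2) := pow16_le_rpow_two (by positivity)
    refine le_trans ?_ h1
    have h48 : (u/2)/24 = u/48 := by ring
    have h16 : (u/48)^16 = u^3*u^13/48^16 := by rw [div_pow]; ring
    have hu13 : (1000:ℝ)^13 ≤ u^13 := pow_le_pow_left₀ (by norm_num) hu1000.le 13
    have hu3 : (0:ℝ) ≤ u^3 := by positivity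
    rw [h48, h16, le_div_iff₀ (by positivity)]
    calc 2419200*u^3*(48:ℝ)^16 = u^3 * ((2419200:ℝ)*48^16) := by ring
    _ ≤ u^3 * (1000:ℝ)^13 := mul_le_mul_of_nonneg_left (by norm_num) hu3
    _ ≤ u^3 * u^13 := mul_le_mul_of_nonneg_left hu13 hu3
  have hsplit : (2:ℝ)^(19.5*u) * (2:ℝ)^(u/2) = k := by
    rw [hk, h20u, ← Real.rpow_add (by norm_num)]
    congr 1
    ring
  have h3m1 : (1:ℝ) ≤ (3:ℝ)^m := by
    have := pow_le_pow_left₀ (by norm_num : (0:ℝ) ≤ 1) (by norm_num : (1:ℝ) ≤ 3) m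
    simpa using this
  have hα3 : α^3 * (1728*u^3) = 1 := by
    calc α^3*(1728*u^3) = (α*(12*u))^3 := by ring
    _ = 1 := by rw [hαu]; norm_num
  have hN4 : 2 + 12*(3:ℝ)^m ≤ α^3*k/100 := by
    have hkk : 14 * (3:ℝ)^m * (172800*u^3) ≤ k := by
      calc 14 * (3:ℝ)^m * (172800*u^3) = ((3:ℝ)^m) * (2419200*u^3) := by ring
      _ ≤ (2:ℝ)^(19.5*u) * (2:ℝ)^(u/2) :=
          mul_le_mul h3m2 hP4 (by positivity) (by positivity)
      _ = k := hsplit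
    have h5 := mul_le_mul_of_nonneg_left hkk (pow_nonneg hαpos.le 3)
    have h6 : α^3*(14*(3:ℝ)^m*(172800*u^3)) = 1400*(3:ℝ)^m := by
      linear_combination (1400*(3:ℝ)^m) * hα3
    rw [le_div_iff₀ (by norm_num : (0:ℝ) < 100)]
    linarith
  -- shared pieces for num9/num10
  have e1 : α^3*k/100 ≤ α^2*(n:ℝ)/8 := by
    have h5 : α^3*k = α*(α^2*k) := by ring
    have h6 : α*(α^2*k) ≤ 1*(α^2*k) :=
      mul_le_mul_of_nonneg_right hα1 (by nlinarith)
    have h7 := mul_le_mul_of_nonneg_left hkn (sq_nonneg α)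
    linarith
  have e2 : (1:ℝ) ≤ α^2*(n:ℝ)/8 := by linarith
  have e3 : (α^3*k/100)*((n:ℝ)/k) = α^3*(n:ℝ)/100 := by
    field_simp
  have e4 : α^3*(n:ℝ)/100 ≤ α^2*(n:ℝ)/8 := by
    have h5 : α^3*(n:ℝ) = α*(α^2*(n:ℝ)) := by ring
    have h6 : α*(α^2*(n:ℝ)) ≤ 1*(α^2*(n:ℝ)) :=
      mul_le_mul_of_nonneg_right hα1 (by nlinarith)
    linarith
  have e5 : (n:ℝ)/k ≤ α^2*(n:ℝ)/8 := by
    rw [div_le_div_iff₀ hkpos (by norm_num : (0:ℝ) < 8)]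
    have h5 := mul_le_mul_of_nonneg_left hα2k hnpos.le
    nlinarith
  have e6 : (0:ℝ) < α^2*(n:ℝ) := by nlinarith
  have e8 : ((α^3*k/100)+1)*((n:ℝ)/k) = (α^3*k/100)*((n:ℝ)/k) + (n:ℝ)/k := by ring
  have e3' : (α^3*k/100)*((n:ℝ)/k) ≤ α^2*(n:ℝ)/8 := by rw [e3]; exact e4
  refine ⟨hαpos, hα1, hkpos, hk1, hkn, hnk1, hknk, hα2k, hα2n, hN3, hN4, ?_, ?_⟩
  · rw [e8]
    linarith
  · have e7 : 8*(α^3*k/100)*(n:ℝ)/(α*k) = 8*(α^2*(n:ℝ))/100 := by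
      field_simp
    rw [e7]
    linarith

end AuxNum


section AuxCount
set_option linter.unusedSectionVars false

variable {V E C : Type*} [DecidableEq V] [DecidableEq E] [DecidableEq C] [Fintype E] [Fintype C]
variable {fst snd : E → V} {col : E → C} {M : Finset E}

lemma exists_unblocked {β : Type*} [DecidableEq β] {Cand B1 B2 B3 : Finset β}
    (h : (B1.card:ℝ) + B2.card + B3.card < Cand.card) :
    ∃ x ∈ Cand, x ∉ B1 ∧ x ∉ B2 ∧ x ∉ B3 := by
  by_contra hc
  push_neg at hc
  have hsub : Cand ⊆ B1 ∪ B2 ∪ B3 := by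
    intro x hx
    by_cases h1 : x ∈ B1
    · exact Finset.mem_union_left _ (Finset.mem_union_left _ h1)
    by_cases h2 : x ∈ B2
    · exact Finset.mem_union_left _ (Finset.mem_union_right _ h2)
    exact Finset.mem_union_right _ (hc x hx h1 h2)
  have h1 := Finset.card_le_card hsub
  have h2 := (Finset.card_union_le (B1 ∪ B2) B3)
  have h3 := (Finset.card_union_le B1 B2)
  have : (Cand.card:ℝ) ≤ (B1.card:ℝ) + B2.card + B3.card := by
    push_cast
    have := le_trans h1 (le_trans h2 (by omega : (B1 ∪ B2).card + B3.card ≤ B1.card + B2.card + B3.card))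
    exact_mod_cast this
  linarith

/-- Edges through a fixed vertex have pairwise distinct colours. -/
lemma card_filter_col_mem_le
    (hproper : ∀ e f : E, e ≠ f → (endpts fst snd e ∩ endpts fst snd f).Nonempty → col e ≠ col f)
    (v : V) (S : Finset E) (hS : ∀ f ∈ S, v ∈ endpts fst snd f) (D : Finset C) :
    (S.filter fun f => col f ∈ D).card ≤ D.card := by
  apply Finset.card_le_card_of_injOn col
  · intro f hf
    exact (Finset.mem_filter.1 hf).2
  · intro f hf g hg hfg
    by_contra hne
    refine hproper f g hne ⟨v, Finset.mem_inter.2 ⟨?_, ?_⟩⟩ hfg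
    · exact hS f (Finset.mem_filter.1 (by exact_mod_cast hf)).1
    · exact hS g (Finset.mem_filter.1 (by exact_mod_cast hg)).1

/-- Degree of a vertex is at most the number of colours. -/
lemma deg_le_card
    (hproper : ∀ e f : E, e ≠ f → (endpts fst snd e ∩ endpts fst snd f).Nonempty → col e ≠ col f)
    (v : V) (S : Finset E) (hS : ∀ f ∈ S, v ∈ endpts fst snd f) :
    S.card ≤ Fintype.card C := by
  have : S.card ≤ (Finset.univ : Finset C).card := by
    apply Finset.card_le_card_of_injOn col
    · intro f _; exact Finset.mem_univ _
    · intro f hf g hg hfg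
      by_contra hne
      exact hproper f g hne ⟨v, Finset.mem_inter.2 ⟨hS f (by exact_mod_cast hf), hS g (by exact_mod_cast hg)⟩⟩ hfg
  simpa using this

/-- Edges from `t` into a vertex set `W`, counted with multiplicity bound. -/
lemma card_filter_other_mem_le [Fintype V] {n k : ℝ}
    (hmult : ∀ u v : V,
      ((Finset.univ.filter fun e : E => endpts fst snd e = ({u, v} : Finset V)).card : ℝ) ≤ n / k)
    (hnk : 0 ≤ n/k) (t : V) (W : Finset V) (S : Finset E)
    (hS : ∀ f ∈ S, t ∈ endpts fst snd f) :
    ((S.filter fun f => other fst snd t f ∈ W).card : ℝ) ≤ W.card * (n/k) := by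
  have hsub : S.filter (fun f => other fst snd t f ∈ W) ⊆
      W.biUnion (fun w => Finset.univ.filter fun f => endpts fst snd f = ({t, w} : Finset V)) := by
    intro f hf
    rw [Finset.mem_filter] at hf
    rw [Finset.mem_biUnion]
    exact ⟨other fst snd t f, hf.2, Finset.mem_filter.2 ⟨Finset.mem_univ _, endpts_eq_pair (hS f hf.1)⟩⟩
  calc ((S.filter fun f => other fst snd t f ∈ W).card : ℝ)
      ≤ ((W.biUnion (fun w => Finset.univ.filter fun f => endpts fst snd f = ({t, w} : Finset V))).card : ℝ) := by
        exact_mod_cast Finset.card_le_card hsub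
    _ ≤ ∑ w ∈ W, ((Finset.univ.filter fun f : E => endpts fst snd f = ({t, w} : Finset V)).card : ℝ) := by
        rw [← Nat.cast_sum]
        exact_mod_cast Finset.card_biUnion_le
    _ ≤ ∑ _w ∈ W, (n/k) := Finset.sum_le_sum (fun w _ => hmult t w)
    _ = W.card * (n/k) := by rw [Finset.sum_const]; ring

/-- Edges from `t` to heads of matching edges with colours in `D'`. -/
lemma card_filter_other_head_le [Fintype V] {n k : ℝ}
    (hmult : ∀ u v : V,
      ((Finset.univ.filter fun e : E => endpts fst snd e = ({u, v} : Finset V)).card : ℝ) ≤ n / k)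
    (hnk : 0 ≤ n/k) (hM : IsRainbowMatching fst snd col M) (tl : E → V)
    (t : V) (D' : Finset C) (S : Finset E)
    (hS : ∀ f ∈ S, t ∈ endpts fst snd f) :
    ((S.filter fun f => ∃ h ∈ M, col h ∈ D' ∧ other fst snd t f = hdOf fst snd tl h).card : ℝ)
      ≤ D'.card * (n/k) := by
  have hsub : S.filter (fun f => ∃ h ∈ M, col h ∈ D' ∧ other fst snd t f = hdOf fst snd tl h) ⊆
      D'.biUnion (fun d => Finset.univ.filter fun f =>
        ∃ h ∈ M, col h = d ∧ endpts fst snd f = ({t, hdOf fst snd tl h} : Finset V)) := by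
    intro f hf
    rw [Finset.mem_filter] at hf
    obtain ⟨h, hh, hcol, hother⟩ := hf.2
    rw [Finset.mem_biUnion]
    refine ⟨col h, hcol, Finset.mem_filter.2 ⟨Finset.mem_univ _, h, hh, rfl, ?_⟩⟩
    rw [← hother]
    exact endpts_eq_pair (hS f hf.1)
  have hper : ∀ d ∈ D', ((Finset.univ.filter fun f : E =>
      ∃ h ∈ M, col h = d ∧ endpts fst snd f = ({t, hdOf fst snd tl h} : Finset V)).card : ℝ) ≤ n/k := by
    intro d _
    by_cases hex : ∃ h ∈ M, col h = d
    · obtain ⟨h0, hh0, hcol0⟩ := hex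
      refine le_trans ?_ (hmult t (hdOf fst snd tl h0))
      have : (Finset.univ.filter fun f : E =>
          ∃ h ∈ M, col h = d ∧ endpts fst snd f = ({t, hdOf fst snd tl h} : Finset V)) ⊆
          (Finset.univ.filter fun f : E => endpts fst snd f = ({t, hdOf fst snd tl h0} : Finset V)) := by
        intro f hf
        rw [Finset.mem_filter] at hf ⊢
        obtain ⟨h, hh, hcolh, hend⟩ := hf.2
        have : h = h0 := hM.2 h hh h0 hh0 (hcolh.trans hcol0.symm)
        exact ⟨Finset.mem_univ _, this ▸ hend⟩
      exact_mod_cast Finset.card_le_card this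
    · have : (Finset.univ.filter fun f : E =>
          ∃ h ∈ M, col h = d ∧ endpts fst snd f = ({t, hdOf fst snd tl h} : Finset V)) = ∅ := by
        rw [Finset.filter_eq_empty_iff]
        intro f _
        rintro ⟨h, hh, hcolh, -⟩
        exact hex ⟨h, hh, hcolh⟩
      simp [this]
      exact hnk
  calc ((S.filter fun f => ∃ h ∈ M, col h ∈ D' ∧ other fst snd t f = hdOf fst snd tl h).card : ℝ)
      ≤ ((D'.biUnion (fun d => Finset.univ.filter fun f =>
        ∃ h ∈ M, col h = d ∧ endpts fst snd f = ({t, hdOf fst snd tl h} : Finset V))).card : ℝ) := by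
        exact_mod_cast Finset.card_le_card hsub
    _ ≤ ∑ d ∈ D', ((Finset.univ.filter fun f : E =>
        ∃ h ∈ M, col h = d ∧ endpts fst snd f = ({t, hdOf fst snd tl h} : Finset V)).card : ℝ) := by
        rw [← Nat.cast_sum]
        exact_mod_cast Finset.card_biUnion_le
    _ ≤ ∑ _d ∈ D', (n/k) := Finset.sum_le_sum hper
    _ = D'.card * (n/k) := by rw [Finset.sum_const]; ring

lemma card_mVerts_eq (hloop : ∀ e : E, fst e ≠ snd e)
    (hM : IsRainbowMatching fst snd col M) :
    (mVerts fst snd M).card = 2 * M.card := by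
  rw [mVerts, Finset.card_biUnion]
  · rw [Finset.sum_congr rfl (fun g _ => endpts_card hloop g)]
    rw [Finset.sum_const]
    ring
  · intro g hg h hh hne
    rw [Function.onFun, Finset.disjoint_iff_inter_eq_empty]
    exact hM.1 g hg h hh hne

lemma card_M_le_card_C (hM : IsRainbowMatching fst snd col M) :
    M.card ≤ Fintype.card C := by
  have h1 : M.card = (M.image col).card := by
    rw [Finset.card_image_of_injOn]
    intro f hf g hg hfg
    exact hM.2 f hf g hg hfg
  rw [h1]
  simpa using Finset.card_le_card (Finset.subset_univ (M.image col))

lemma card_C0_eq (hM : IsRainbowMatching fst snd col M) :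
    ((C0 col M).card : ℝ) = (Fintype.card C : ℝ) - M.card := by
  have h1 : (mCols col M).card = M.card := by
    rw [mCols, Finset.card_image_of_injOn]
    intro f hf g hg hfg
    exact hM.2 f hf g hg hfg
  rw [C0, Finset.card_sdiff_of_subset (by intro c _; exact Finset.mem_univ c)]
  rw [Nat.cast_sub (by rw [h1]; exact card_M_le_card_C hM)]
  rw [h1]
  simp

end AuxCount


section AuxE0
set_option linter.unusedSectionVars false

variable {V E C : Type*} [DecidableEq V] [DecidableEq E] [DecidableEq C]
  [Fintype V] [Fintype E] [Fintype C]
variable {fst snd : E → V} {col : E → C} {M : Finset E}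

/-- A colour unused by a maximum rainbow matching has no edge inside `V₀`. -/
lemma no_outside_edge (hM : IsRainbowMatching fst snd col M)
    (hMmax : ∀ S : Finset E, IsRainbowMatching fst snd col S → S.card ≤ M.card)
    {f : E} (hcf : col f ∈ C0 col M)
    (h1 : fst f ∉ mVerts fst snd M) (h2 : snd f ∉ mVerts fst snd M) : False := by
  have hfM : f ∉ M := fun hf => h1 (endpts_subset_mVerts hf (fst_mem_endpts f))
  have hnew : IsRainbowMatching fst snd col (insert f M) := by
    constructor
    · intro a ha b hb hne
      rw [Finset.mem_insert] at ha hb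
      have key : ∀ g ∈ M, endpts fst snd f ∩ endpts fst snd g = ∅ := by
        intro g hg
        rw [Finset.eq_empty_iff_forall_notMem]
        intro v hv
        rw [Finset.mem_inter] at hv
        rcases mem_endpts_iff.1 hv.1 with h | h
        · exact h1 (h ▸ endpts_subset_mVerts hg hv.2)
        · exact h2 (h ▸ endpts_subset_mVerts hg hv.2)
      rcases ha with rfl | ha
      · rcases hb with rfl | hb
        · exact absurd rfl hne
        · exact key b hb
      · rcases hb with rfl | hb
        · rw [Finset.inter_comm]; exact key a ha
        · exact hM.1 a ha b hb hne
    · intro a ha b hb hab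
      rw [Finset.mem_insert] at ha hb
      rcases ha with rfl | ha
      · rcases hb with rfl | hb
        · rfl
        · exact absurd hab.symm (mem_C0_not_col hcf hb)
      · rcases hb with rfl | hb
        · exact absurd hab (mem_C0_not_col hcf ha)
        · exact hM.2 a ha b hb hab
  have := hMmax _ hnew
  rw [Finset.card_insert_of_notMem hfM] at this
  omega

/-- Each vertex sees at most `|C₀|` external `C₀`-edges. -/
lemma extC0deg_le (hproper : ∀ e f : E, e ≠ f →
      (endpts fst snd e ∩ endpts fst snd f).Nonempty → col e ≠ col f) (v : V) :
    extC0deg fst snd col M v ≤ (C0 col M).card := by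
  rw [extC0deg]
  have : (Finset.univ.filter fun f : E =>
      IsExternal fst snd M f ∧ col f ∈ C0 col M ∧ v ∈ endpts fst snd f) =
      ((Finset.univ.filter fun f : E =>
      IsExternal fst snd M f ∧ col f ∈ C0 col M ∧ v ∈ endpts fst snd f).filter
        fun f => col f ∈ C0 col M) := by
    rw [Finset.filter_filter]
    congr 1
    ext f
    tauto
  rw [this]
  exact card_filter_col_mem_le hproper v _ (fun f hf => (Finset.mem_filter.1 hf).2.2.2) _

/-- The heart of the double count: `|E₀| ≥ 5αn`. -/
lemma E0_large {ε k α : ℝ} {n : ℕ}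
    (hloop : ∀ e : E, fst e ≠ snd e)
    (hproper : ∀ e f : E, e ≠ f → (endpts fst snd e ∩ endpts fst snd f).Nonempty → col e ≠ col f)
    (hC : Fintype.card C = n)
    (habund : ∀ c : C, (1+ε) * n ≤ ((Finset.univ.filter fun e : E => col e = c).card : ℝ))
    (hM : IsRainbowMatching fst snd col M)
    (hMmax : ∀ S : Finset E, IsRainbowMatching fst snd col S → S.card ≤ M.card)
    (hMlt : (M.card : ℝ) < n - k)
    (hε : ε = 12*α) (hαpos : 0 < α) (hk1 : 1 ≤ k) :
    5*α*(n:ℝ) ≤ ((E0 fst snd col M α).card : ℝ) := by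
  set VM := mVerts fst snd M with hVM
  -- |C0| > k ≥ 1
  have hC0card : ((C0 col M).card : ℝ) = (n:ℝ) - M.card := by
    rw [card_C0_eq hM, hC]
  have hC0pos : (0:ℝ) < ((C0 col M).card : ℝ) := by
    rw [hC0card]; linarith
  have hMn : (M.card : ℝ) ≤ n := by
    have := card_M_le_card_C (C := C) hM
    rw [hC] at this
    exact_mod_cast this
  -- step (c): each C0 colour has ≥ εn external edges
  have hext : ∀ c ∈ C0 col M,
      ε*(n:ℝ) ≤ ((Finset.univ.filter fun f : E => col f = c ∧ IsExternal fst snd M f).card : ℝ) := by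
    intro c hc
    set Kin := Finset.univ.filter fun f : E => col f = c ∧ fst f ∈ VM ∧ snd f ∈ VM with hKin
    have hKinM : Kin.card ≤ M.card := by
      have hdisj : ∀ a ∈ Kin, ∀ b ∈ Kin, a ≠ b →
          Disjoint (endpts fst snd a) (endpts fst snd b) := by
        intro a ha b hb hne
        rw [Finset.disjoint_iff_inter_eq_empty]
        by_contra hcon
        have hnonempty : (endpts fst snd a ∩ endpts fst snd b).Nonempty :=
          Finset.nonempty_iff_ne_empty.2 hcon
        rw [Finset.mem_filter] at ha hb
        exact hproper a b hne hnonempty (ha.2.1.trans hb.2.1.symm)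
      have h2card : (Kin.biUnion (endpts fst snd)).card = 2 * Kin.card := by
        rw [Finset.card_biUnion hdisj, Finset.sum_congr rfl (fun g _ => endpts_card hloop g),
          Finset.sum_const]
        ring
      have hsub : Kin.biUnion (endpts fst snd) ⊆ VM := by
        intro v hv
        rw [Finset.mem_biUnion] at hv
        obtain ⟨f, hf, hvf⟩ := hv
        rw [Finset.mem_filter] at hf
        rcases mem_endpts_iff.1 hvf with h | h
        · exact h ▸ hf.2.2.1
        · exact h ▸ hf.2.2.2
      have := Finset.card_le_card hsub
      rw [h2card, card_mVerts_eq hloop hM] at this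
      omega
    have hcover : (Finset.univ.filter fun f : E => col f = c) ⊆
        (Finset.univ.filter fun f : E => col f = c ∧ IsExternal fst snd M f) ∪ Kin := by
      intro f hf
      rw [Finset.mem_filter] at hf
      by_cases h1 : fst f ∈ VM <;> by_cases h2 : snd f ∈ VM
      · exact Finset.mem_union_right _ (Finset.mem_filter.2 ⟨Finset.mem_univ _, hf.2, h1, h2⟩)
      · exact Finset.mem_union_left _ (Finset.mem_filter.2
          ⟨Finset.mem_univ _, hf.2, Or.inl ⟨h1, h2⟩⟩)
      · exact Finset.mem_union_left _ (Finset.mem_filter.2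
          ⟨Finset.mem_univ _, hf.2, Or.inr ⟨h1, h2⟩⟩)
      · exact absurd (no_outside_edge hM hMmax (hf.2 ▸ hc) h1 h2) (fun h => h)
    have hcard := Finset.card_le_card hcover
    have hcard2 := Finset.card_union_le
      (Finset.univ.filter fun f : E => col f = c ∧ IsExternal fst snd M f) Kin
    have habc := habund c
    have : ((Finset.univ.filter fun f : E => col f = c).card : ℝ)
        ≤ ((Finset.univ.filter fun f : E => col f = c ∧ IsExternal fst snd M f).card : ℝ)
          + Kin.card := by
      push_cast
      exact_mod_cast le_trans hcard hcard2
    have hKinR : (Kin.card : ℝ) ≤ M.card := by exact_mod_cast hKinM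
    nlinarith
  -- step (d): double counting
  set X := Finset.univ.filter fun f : E => IsExternal fst snd M f ∧ col f ∈ C0 col M with hX
  have hXlow : ε*(n:ℝ)*((C0 col M).card) ≤ (X.card : ℝ) := by
    have hXeq : X = (C0 col M).biUnion (fun c =>
        Finset.univ.filter fun f : E => col f = c ∧ IsExternal fst snd M f) := by
      ext f
      rw [Finset.mem_biUnion]
      simp only [hX, Finset.mem_filter, Finset.mem_univ, true_and]
      constructor
      · rintro ⟨h1, h2⟩; exact ⟨col f, h2, rfl, h1⟩
      · rintro ⟨c, hc, rfl, h1⟩; exact ⟨h1, hc⟩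
    rw [hXeq, Finset.card_biUnion]
    · rw [Nat.cast_sum]
      calc ε*(n:ℝ)*((C0 col M).card) = ∑ _c ∈ C0 col M, ε*(n:ℝ) := by
            rw [Finset.sum_const]; ring
        _ ≤ ∑ c ∈ C0 col M, ((Finset.univ.filter fun f : E =>
              col f = c ∧ IsExternal fst snd M f).card : ℝ) :=
            Finset.sum_le_sum hext
    · intro c1 h1 c2 h2 hne
      rw [Function.onFun, Finset.disjoint_left]
      intro f hf1 hf2
      rw [Finset.mem_filter] at hf1 hf2
      exact hne (hf1.2.1.symm.trans hf2.2.1)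
  have hXhigh : (X.card : ℝ) ≤ ∑ g ∈ M, ((extC0deg fst snd col M (fst g) : ℝ)
      + (extC0deg fst snd col M (snd g) : ℝ)) := by
    have hsub : X ⊆ M.biUnion (fun g => Finset.univ.filter fun f : E =>
        (IsExternal fst snd M f ∧ col f ∈ C0 col M) ∧
        (fst g ∈ endpts fst snd f ∨ snd g ∈ endpts fst snd f)) := by
      intro f hf
      rw [hX, Finset.mem_filter] at hf
      have hvm : fst f ∈ VM ∨ snd f ∈ VM := by
        rcases hf.2.1 with h | h
        · exact Or.inl h.1
        · exact Or.inr h.2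
      have : ∃ v ∈ endpts fst snd f, v ∈ VM := by
        rcases hvm with h | h
        · exact ⟨fst f, fst_mem_endpts f, h⟩
        · exact ⟨snd f, snd_mem_endpts f, h⟩
      obtain ⟨v, hvf, hvVM⟩ := this
      rw [hVM, mem_mVerts] at hvVM
      obtain ⟨g, hg, hvg⟩ := hvVM
      rw [Finset.mem_biUnion]
      refine ⟨g, hg, Finset.mem_filter.2 ⟨Finset.mem_univ _, hf.2, ?_⟩⟩
      rcases mem_endpts_iff.1 hvg with h | h
      · exact Or.inl (h ▸ hvf)
      · exact Or.inr (h ▸ hvf)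
    have hb := Finset.card_biUnion_le (s := M) (t := fun g => Finset.univ.filter fun f : E =>
        (IsExternal fst snd M f ∧ col f ∈ C0 col M) ∧
        (fst g ∈ endpts fst snd f ∨ snd g ∈ endpts fst snd f))
    have hper : ∀ g ∈ M, ((Finset.univ.filter fun f : E =>
        (IsExternal fst snd M f ∧ col f ∈ C0 col M) ∧
        (fst g ∈ endpts fst snd f ∨ snd g ∈ endpts fst snd f)).card : ℝ)
        ≤ (extC0deg fst snd col M (fst g) : ℝ) + (extC0deg fst snd col M (snd g) : ℝ) := by
      intro g _
      have hsub2 : (Finset.univ.filter fun f : E =>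
          (IsExternal fst snd M f ∧ col f ∈ C0 col M) ∧
          (fst g ∈ endpts fst snd f ∨ snd g ∈ endpts fst snd f)) ⊆
          (Finset.univ.filter fun f : E => IsExternal fst snd M f ∧ col f ∈ C0 col M ∧
            fst g ∈ endpts fst snd f) ∪
          (Finset.univ.filter fun f : E => IsExternal fst snd M f ∧ col f ∈ C0 col M ∧
            snd g ∈ endpts fst snd f) := by
        intro f hf
        rw [Finset.mem_filter] at hf
        rcases hf.2.2 with h | h
        · exact Finset.mem_union_left _ (Finset.mem_filter.2
            ⟨Finset.mem_univ _, hf.2.1.1, hf.2.1.2, h⟩)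
        · exact Finset.mem_union_right _ (Finset.mem_filter.2
            ⟨Finset.mem_univ _, hf.2.1.1, hf.2.1.2, h⟩)
      have h1 := Finset.card_le_card hsub2
      have h2 := Finset.card_union_le (Finset.univ.filter fun f : E =>
          IsExternal fst snd M f ∧ col f ∈ C0 col M ∧ fst g ∈ endpts fst snd f)
        (Finset.univ.filter fun f : E =>
          IsExternal fst snd M f ∧ col f ∈ C0 col M ∧ snd g ∈ endpts fst snd f)
      rw [extC0deg, extC0deg]
      push_cast
      exact_mod_cast le_trans h1 h2
    calc (X.card : ℝ) ≤ ((M.biUnion _).card : ℝ) := by exact_mod_cast Finset.card_le_card hsub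
      _ ≤ ∑ g ∈ M, ((Finset.univ.filter fun f : E =>
          (IsExternal fst snd M f ∧ col f ∈ C0 col M) ∧
          (fst g ∈ endpts fst snd f ∨ snd g ∈ endpts fst snd f)).card : ℝ) := by
          rw [← Nat.cast_sum]
          exact_mod_cast hb
      _ ≤ ∑ g ∈ M, ((extC0deg fst snd col M (fst g) : ℝ)
          + (extC0deg fst snd col M (snd g) : ℝ)) := Finset.sum_le_sum hper
  -- split sum over E0 and M \ E0
  set E0' := E0 fst snd col M α with hE0'
  have hE0sub : E0' ⊆ M := Finset.filter_subset _ _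
  have hsumsplit : ∑ g ∈ M, ((extC0deg fst snd col M (fst g) : ℝ)
      + (extC0deg fst snd col M (snd g) : ℝ))
      ≤ (E0'.card : ℝ) * (2*((C0 col M).card : ℝ))
        + (M.card : ℝ) * (2*α*((C0 col M).card : ℝ)) := by
    rw [← Finset.sum_sdiff hE0sub]
    have hpart1 : ∑ g ∈ M \ E0', ((extC0deg fst snd col M (fst g) : ℝ)
        + (extC0deg fst snd col M (snd g) : ℝ))
        ≤ ((M \ E0').card : ℝ) * (2*α*((C0 col M).card : ℝ)) := by
      have hsmul := Finset.sum_le_card_nsmul (M \ E0')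
        (fun g => ((extC0deg fst snd col M (fst g) : ℝ) + (extC0deg fst snd col M (snd g) : ℝ)))
        (2*α*((C0 col M).card : ℝ)) ?_
      · rw [nsmul_eq_mul] at hsmul
        exact hsmul
      · intro g hg
        rw [Finset.mem_sdiff] at hg
        have hnot : ¬ (∃ v ∈ endpts fst snd g,
            α * ((C0 col M).card : ℝ) ≤ (extC0deg fst snd col M v : ℝ)) := by
          intro hcon
          exact hg.2 (Finset.mem_filter.2 ⟨hg.1, hcon⟩)
        push_neg at hnot
        have h1 := hnot (fst g) (fst_mem_endpts g)
        have h2 := hnot (snd g) (snd_mem_endpts g)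
        linarith
    have hpart2 : ∑ g ∈ E0', ((extC0deg fst snd col M (fst g) : ℝ)
        + (extC0deg fst snd col M (snd g) : ℝ))
        ≤ (E0'.card : ℝ) * (2*((C0 col M).card : ℝ)) := by
      have hsmul := Finset.sum_le_card_nsmul E0'
        (fun g => ((extC0deg fst snd col M (fst g) : ℝ) + (extC0deg fst snd col M (snd g) : ℝ)))
        (2*((C0 col M).card : ℝ)) ?_
      · rw [nsmul_eq_mul] at hsmul
        exact hsmul
      · intro g _
        have h1 : (extC0deg fst snd col M (fst g) : ℝ) ≤ ((C0 col M).card : ℝ) := by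
          exact_mod_cast extC0deg_le hproper (fst g)
        have h2 : (extC0deg fst snd col M (snd g) : ℝ) ≤ ((C0 col M).card : ℝ) := by
          exact_mod_cast extC0deg_le hproper (snd g)
        linarith
    have hMsd : ((M \ E0').card : ℝ) ≤ (M.card : ℝ) := by
      exact_mod_cast Finset.card_le_card (Finset.sdiff_subset)
    have hnn : 0 ≤ 2*α*((C0 col M).card : ℝ) := by positivity
    nlinarith
  -- conclude
  have hchain : ε*(n:ℝ)*((C0 col M).card : ℝ)
      ≤ 2*(E0'.card : ℝ)*((C0 col M).card : ℝ)
        + 2*α*(M.card : ℝ)*((C0 col M).card : ℝ) := by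
    calc ε*(n:ℝ)*((C0 col M).card : ℝ) ≤ (X.card : ℝ) := hXlow
    _ ≤ ∑ g ∈ M, ((extC0deg fst snd col M (fst g) : ℝ)
        + (extC0deg fst snd col M (snd g) : ℝ)) := hXhigh
    _ ≤ (E0'.card : ℝ) * (2*((C0 col M).card : ℝ))
        + (M.card : ℝ) * (2*α*((C0 col M).card : ℝ)) := hsumsplit
    _ = 2*(E0'.card : ℝ)*((C0 col M).card : ℝ)
        + 2*α*(M.card : ℝ)*((C0 col M).card : ℝ) := by ring
  have hdiv : ε*(n:ℝ) ≤ 2*(E0'.card : ℝ) + 2*α*(M.card : ℝ) := by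
    by_contra hcon
    push_neg at hcon
    have := mul_lt_mul_of_pos_right hcon hC0pos
    linarith
  have hαM := mul_le_mul_of_nonneg_left hMn hαpos.le
  rw [hε] at hdiv
  linarith

end AuxE0



section Free
set_option linter.unusedSectionVars false

variable {V E C : Type*} [DecidableEq V] [DecidableEq E] [DecidableEq C]
  [Fintype V] [Fintype E] [Fintype C]

/-- The result of "freeing" the targets `T ⊆ M`: a set `P ⊆ M` of removed edges and a
set `Q` of new edges such that `(M \ P) ∪ Q` is a rainbow matching avoiding the heads
and colours of `T`, the forbidden outside vertices `W` and forbidden colours `D`. -/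
def FreeOut (fst snd : E → V) (col : E → C) (M : Finset E) (tl : E → V)
    (W : Finset V) (D : Finset C) (T P Q : Finset E) : Prop :=
  P ⊆ M ∧ T ⊆ P ∧ (∀ p ∈ P, col p ∉ D) ∧ Q.card = P.card ∧
  (∀ q ∈ Q, q ∉ M) ∧
  (∀ q ∈ Q, ∀ q' ∈ Q, q ≠ q' → endpts fst snd q ∩ endpts fst snd q' = ∅) ∧
  (∀ q ∈ Q, ∀ q' ∈ Q, col q = col q' → q = q') ∧
  (∀ q ∈ Q, ∀ v ∈ endpts fst snd q,
      (v ∈ mVerts fst snd P ∧ ∀ g ∈ T, v ≠ hdOf fst snd tl g) ∨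
      (v ∉ mVerts fst snd M ∧ v ∉ W)) ∧
  (∀ q ∈ Q, (col q ∈ P.image col ∧ ∀ g ∈ T, col q ≠ col g) ∨
      (col q ∈ C0 col M ∧ col q ∉ D))

lemma endpts_card_le (fst snd : E → V) (f : E) : (endpts fst snd f).card ≤ 2 := by
  unfold endpts
  exact le_trans (Finset.card_insert_le _ _) (by simp)

lemma multiFree
    {fst snd : E → V} {col : E → C} {M : Finset E} {tl : E → V}
    (hM : IsRainbowMatching fst snd col M)
    {Θ B : ℝ} (hB : 1 ≤ B)
    {A : Finset E} (hA : A ⊆ M)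
    (orc : ∀ g ∈ A, ∀ (W : Finset V) (D : Finset C),
      (W.card : ℝ) + 3*B ≤ Θ → (D.card : ℝ) + 3*B ≤ Θ → col g ∉ D →
      ∃ P Q, FreeOut fst snd col M tl W D {g} P Q ∧ (P.card : ℝ) ≤ B) :
    ∀ T : Finset E, T ⊆ A → ∀ (W : Finset V) (D : Finset C),
      (W.card : ℝ) + T.card * (4*B) ≤ Θ → (D.card : ℝ) + T.card * (4*B) ≤ Θ →
      (∀ g ∈ T, col g ∉ D) →
      ∃ P Q, FreeOut fst snd col M tl W D T P Q ∧ (P.card : ℝ) ≤ T.card * B := by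
  intro T
  induction T using Finset.induction_on with
  | empty =>
    intro _ W D _ _ _
    refine ⟨∅, ∅, ⟨by simp, by simp, by simp, by simp, by simp, by simp, by simp, by simp, by simp⟩, by simp⟩
  | @insert g T' hgT' ih =>
    intro hTA W D hWbud hDbud hTD
    have hBpos : (0:ℝ) < B := lt_of_lt_of_le one_pos hB
    have hgA : g ∈ A := hTA (Finset.mem_insert_self g T')
    have hgM : g ∈ M := hA hgA
    have hT'A : T' ⊆ A := fun x hx => hTA (Finset.mem_insert_of_mem hx)
    have hT'M : T' ⊆ M := fun x hx => hA (hT'A hx)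
    have hcard : ((insert g T').card : ℝ) = (T'.card : ℝ) + 1 := by
      rw [Finset.card_insert_of_notMem hgT']
      push_cast
      ring
    have hT'nn : (0:ℝ) ≤ T'.card := Nat.cast_nonneg _
    rw [hcard] at hWbud hDbud
    -- first free the single target g
    set D1 := D ∪ T'.image col with hD1
    have hD1card : (D1.card : ℝ) ≤ (D.card : ℝ) + T'.card := by
      have h1 := Finset.card_union_le D (T'.image col)
      have h2 := Finset.card_image_le (s := T') (f := col)
      have : D1.card ≤ D.card + T'.card := le_trans h1 (by omega)
      exact_mod_cast this
    have horcW : (W.card : ℝ) + 3*B ≤ Θ := by nlinarith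
    have horcD : (D1.card : ℝ) + 3*B ≤ Θ := by nlinarith
    have hcolgD1 : col g ∉ D1 := by
      rw [hD1, Finset.mem_union]
      rintro (h | h)
      · exact hTD g (Finset.mem_insert_self g T') h
      · obtain ⟨g'', hg'', hcol⟩ := Finset.mem_image.1 h
        exact hgT' (hM.2 g'' (hT'M hg'') g hgM hcol ▸ hg'')
    obtain ⟨P₁, Q₁, hF1, hP1le⟩ := orc g hgA W D1 horcW horcD hcolgD1
    obtain ⟨hP1M, hgP1, hP1D, hQ1card, hQ1M, hQ1disj, hQ1colinj, hQ1v, hQ1c⟩ := hF1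
    have hgP1' : g ∈ P₁ := hgP1 (Finset.mem_singleton_self g)
    have hQ1le : (Q₁.card : ℝ) ≤ B := by rw [hQ1card]; exact hP1le
    -- now free the rest
    set W2 := W ∪ (Q₁.biUnion (endpts fst snd) \ mVerts fst snd M) with hW2
    set D2 := (D ∪ P₁.image col) ∪ Q₁.image col with hD2
    have hW2card : (W2.card : ℝ) ≤ (W.card : ℝ) + 2*Q₁.card := by
      have h1 := Finset.card_union_le W (Q₁.biUnion (endpts fst snd) \ mVerts fst snd M)
      have h2 : (Q₁.biUnion (endpts fst snd) \ mVerts fst snd M).card ≤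
          (Q₁.biUnion (endpts fst snd)).card :=
        Finset.card_le_card (Finset.sdiff_subset)
      have h3 : (Q₁.biUnion (endpts fst snd)).card ≤ 2*Q₁.card := by
        refine le_trans Finset.card_biUnion_le ?_
        calc ∑ q ∈ Q₁, (endpts fst snd q).card ≤ ∑ _q ∈ Q₁, 2 :=
              Finset.sum_le_sum (fun q _ => endpts_card_le fst snd q)
          _ = 2*Q₁.card := by rw [Finset.sum_const]; ring
      have : W2.card ≤ W.card + 2*Q₁.card := le_trans h1 (by omega)
      exact_mod_cast this
    have hD2card : (D2.card : ℝ) ≤ (D.card : ℝ) + P₁.card + Q₁.card := by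
      have h1 := Finset.card_union_le (D ∪ P₁.image col) (Q₁.image col)
      have h2 := Finset.card_union_le D (P₁.image col)
      have h3 := Finset.card_image_le (s := P₁) (f := col)
      have h4 := Finset.card_image_le (s := Q₁) (f := col)
      have : D2.card ≤ D.card + P₁.card + Q₁.card := by
        rw [hD2]; omega
      exact_mod_cast this
    have hihW : (W2.card : ℝ) + T'.card * (4*B) ≤ Θ := by nlinarith
    have hihD : (D2.card : ℝ) + T'.card * (4*B) ≤ Θ := by nlinarith
    have hQ1notD2 : ∀ q ∈ Q₁, col q ∈ D2 := by
      intro q hq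
      rw [hD2]
      exact Finset.mem_union_right _ (Finset.mem_image_of_mem col hq)
    have hT'D2 : ∀ g'' ∈ T', col g'' ∉ D2 := by
      intro g'' hg'' hmem
      rw [hD2, Finset.mem_union, Finset.mem_union] at hmem
      rcases hmem with (h | h) | h
      · exact hTD g'' (Finset.mem_insert_of_mem hg'') h
      · obtain ⟨p, hp, hcol⟩ := Finset.mem_image.1 h
        have : p = g'' := hM.2 p (hP1M hp) g'' (hT'M hg'') hcol
        subst this
        exact hP1D p hp (Finset.mem_union_right _ (Finset.mem_image_of_mem col hg''))
      · obtain ⟨q, hq, hcol⟩ := Finset.mem_image.1 h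
        rcases hQ1c q hq with ⟨hc1, _⟩ | ⟨hc1, _⟩
        · obtain ⟨p, hp, hcolp⟩ := Finset.mem_image.1 hc1
          have hpg : p = g'' := hM.2 p (hP1M hp) g'' (hT'M hg'') (hcolp.trans hcol)
          subst hpg
          exact hP1D p hp (Finset.mem_union_right _ (Finset.mem_image_of_mem col hg''))
        · exact col_notin_C0 (hT'M hg'') (hcol ▸ hc1)
    obtain ⟨P₂, Q₂, hF2, hP2le⟩ := ih hT'A W2 D2 hihW hihD hT'D2
    obtain ⟨hP2M, hT'P2, hP2D, hQ2card, hQ2M, hQ2disj, hQ2colinj, hQ2v, hQ2c⟩ := hF2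
    have hQ2notD2 : ∀ q ∈ Q₂, col q ∉ D2 := by
      intro q hq hmem
      rcases hQ2c q hq with ⟨hc1, _⟩ | ⟨_, hc2⟩
      · obtain ⟨p, hp, hcolp⟩ := Finset.mem_image.1 hc1
        exact hP2D p hp (hcolp ▸ hmem)
      · exact hc2 hmem
    -- disjointness of the two parts
    have hP12 : Disjoint P₁ P₂ := by
      rw [Finset.disjoint_left]
      intro p hp1 hp2
      exact hP2D p hp2 (Finset.mem_union_left _
        (Finset.mem_union_right _ (Finset.mem_image_of_mem col hp1)))
    have hQ12 : Disjoint Q₁ Q₂ := by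
      rw [Finset.disjoint_left]
      intro q hq1 hq2
      exact hQ2notD2 q hq2 (hQ1notD2 q hq1)
    have hgnotP2 : g ∉ P₂ := fun h => hP2D g h (Finset.mem_union_left _
      (Finset.mem_union_right _ (Finset.mem_image_of_mem col hgP1')))
    -- vertex disjointness between mVerts P₁ and mVerts P₂
    have hVP12 : ∀ v : V, v ∈ mVerts fst snd P₁ → v ∈ mVerts fst snd P₂ → False := by
      intro v h1 h2
      obtain ⟨p1, hp1, hv1⟩ := mem_mVerts.1 h1
      obtain ⟨p2, hp2, hv2⟩ := mem_mVerts.1 h2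
      have : p1 = p2 := match_unique hM (hP1M hp1) (hP2M hp2) hv1 hv2
      subst this
      exact Finset.disjoint_left.1 hP12 hp1 hp2
    have hVMP1 : mVerts fst snd P₁ ⊆ mVerts fst snd M :=
      Finset.biUnion_subset_biUnion_of_subset_left _ hP1M
    have hVMP2 : mVerts fst snd P₂ ⊆ mVerts fst snd M :=
      Finset.biUnion_subset_biUnion_of_subset_left _ hP2M
    -- cross disjointness of Q₁, Q₂ edges
    have hcross : ∀ q1 ∈ Q₁, ∀ q2 ∈ Q₂, endpts fst snd q1 ∩ endpts fst snd q2 = ∅ := by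
      intro q1 hq1 q2 hq2
      rw [Finset.eq_empty_iff_forall_notMem]
      intro v hv
      rw [Finset.mem_inter] at hv
      rcases hQ1v q1 hq1 v hv.1 with ⟨hA1, _⟩ | ⟨hB1, hB1'⟩
      · rcases hQ2v q2 hq2 v hv.2 with ⟨hA2, _⟩ | ⟨hB2, _⟩
        · exact hVP12 v hA1 hA2
        · exact hB2 (hVMP1 hA1)
      · rcases hQ2v q2 hq2 v hv.2 with ⟨hA2, _⟩ | ⟨_, hB2'⟩
        · exact hB1 (hVMP2 hA2)
        · refine hB2' (Finset.mem_union_right _ (Finset.mem_sdiff.2 ⟨?_, hB1⟩))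
          exact Finset.mem_biUnion.2 ⟨q1, hq1, hv.1⟩
    refine ⟨P₁ ∪ P₂, Q₁ ∪ Q₂, ⟨?_, ?_, ?_, ?_, ?_, ?_, ?_, ?_, ?_⟩, ?_⟩
    · exact Finset.union_subset hP1M hP2M
    · intro x hx
      rcases Finset.mem_insert.1 hx with rfl | hx
      · exact Finset.mem_union_left _ hgP1'
      · exact Finset.mem_union_right _ (hT'P2 hx)
    · intro p hp
      rcases Finset.mem_union.1 hp with hp | hp
      · intro hd
        exact hP1D p hp (Finset.mem_union_left _ hd)
      · intro hd
        exact hP2D p hp (Finset.mem_union_left _ (Finset.mem_union_left _ hd))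
    · rw [Finset.card_union_of_disjoint hQ12, Finset.card_union_of_disjoint hP12,
        hQ1card, hQ2card]
    · intro q hq
      rcases Finset.mem_union.1 hq with hq | hq
      · exact hQ1M q hq
      · exact hQ2M q hq
    · intro q hq q' hq' hne
      rcases Finset.mem_union.1 hq with hq | hq <;> rcases Finset.mem_union.1 hq' with hq' | hq'
      · exact hQ1disj q hq q' hq' hne
      · exact hcross q hq q' hq'
      · rw [Finset.inter_comm]; exact hcross q' hq' q hq
      · exact hQ2disj q hq q' hq' hne
    · intro q hq q' hq' hcol
      rcases Finset.mem_union.1 hq with hq | hq <;> rcases Finset.mem_union.1 hq' with hq' | hq'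
      · exact hQ1colinj q hq q' hq' hcol
      · exact absurd (hcol ▸ hQ1notD2 q hq) (hQ2notD2 q' hq')
      · exact absurd (hcol ▸ hQ2notD2 q hq) (fun h => h (hQ1notD2 q' hq'))
      · exact hQ2colinj q hq q' hq' hcol
    · intro q hq v hv
      have hhd : ∀ g'' ∈ T', g'' ∈ M := hT'M
      rcases Finset.mem_union.1 hq with hq | hq
      · rcases hQ1v q hq v hv with ⟨h1, h2⟩ | ⟨h1, h2⟩
        · refine Or.inl ⟨Finset.biUnion_subset_biUnion_of_subset_left _
            (Finset.subset_union_left) h1, ?_⟩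
          intro g'' hg'' hveq
          rcases Finset.mem_insert.1 hg'' with rfl | hg''
          · exact h2 g'' (Finset.mem_singleton_self g'') hveq
          · obtain ⟨p, hp, hvp⟩ := mem_mVerts.1 h1
            have hvg'' : v ∈ endpts fst snd g'' := hveq ▸ hdOf_mem_endpts tl g''
            have : p = g'' := match_unique hM (hP1M hp) (hT'M hg'') hvp hvg''
            subst this
            exact hP1D p hp (Finset.mem_union_right _ (Finset.mem_image_of_mem col hg''))
        · exact Or.inr ⟨h1, h2⟩
      · rcases hQ2v q hq v hv with ⟨h1, h2⟩ | ⟨h1, h2⟩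
        · refine Or.inl ⟨Finset.biUnion_subset_biUnion_of_subset_left _
            (Finset.subset_union_right) h1, ?_⟩
          intro g'' hg'' hveq
          rcases Finset.mem_insert.1 hg'' with rfl | hg''
          · obtain ⟨p, hp, hvp⟩ := mem_mVerts.1 h1
            have hvg : v ∈ endpts fst snd g'' := hveq ▸ hdOf_mem_endpts tl g''
            have : p = g'' := match_unique hM (hP2M hp) hgM hvp hvg
            subst this
            exact hgnotP2 hp
          · exact h2 g'' hg'' hveq
        · exact Or.inr ⟨h1, fun h => h2 (Finset.mem_union_left _ h)⟩
    · intro q hq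
      rcases Finset.mem_union.1 hq with hq | hq
      · rcases hQ1c q hq with ⟨h1, h2⟩ | ⟨h1, h2⟩
        · refine Or.inl ⟨?_, ?_⟩
          · rw [Finset.image_union]
            exact Finset.mem_union_left _ h1
          · intro g'' hg'' hcoleq
            rcases Finset.mem_insert.1 hg'' with rfl | hg''
            · exact h2 g'' (Finset.mem_singleton_self g'') hcoleq
            · obtain ⟨p, hp, hcolp⟩ := Finset.mem_image.1 h1
              have : p = g'' := hM.2 p (hP1M hp) g'' (hT'M hg'') (hcolp.trans hcoleq)
              subst this
              exact hP1D p hp (Finset.mem_union_right _ (Finset.mem_image_of_mem col hg''))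
        · exact Or.inr ⟨h1, fun h => h2 (Finset.mem_union_left _ h)⟩
      · rcases hQ2c q hq with ⟨h1, h2⟩ | ⟨h1, h2⟩
        · refine Or.inl ⟨?_, ?_⟩
          · rw [Finset.image_union]
            exact Finset.mem_union_right _ h1
          · intro g'' hg'' hcoleq
            rcases Finset.mem_insert.1 hg'' with rfl | hg''
            · refine hQ2notD2 q hq ?_
              rw [hcoleq]
              exact Finset.mem_union_left _
                (Finset.mem_union_right _ (Finset.mem_image_of_mem col hgP1'))
            · exact h2 g'' hg'' hcoleq
        · refine Or.inr ⟨h1, fun h => h2 ?_⟩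
          rw [hD2]
          exact Finset.mem_union_left _ (Finset.mem_union_left _ h)
    · have h10 : (P₁ ∪ P₂).card = P₁.card + P₂.card := Finset.card_union_of_disjoint hP12
      calc ((P₁ ∪ P₂).card : ℝ) = (P₁.card:ℝ) + P₂.card := by rw [h10]; push_cast; ring
      _ ≤ B + T'.card * B := add_le_add hP1le hP2le
      _ = ((insert g T').card : ℝ) * B := by rw [hcard]; ring

end Free


section AuxMore
set_option linter.unusedSectionVars false

variable {V E C : Type*} [DecidableEq V] [DecidableEq E] [DecidableEq C]
  [Fintype V] [Fintype E] [Fintype C]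
variable {fst snd : E → V} {col : E → C} {M : Finset E}

lemma external_other_not_VM (hloop : ∀ e : E, fst e ≠ snd e) {f : E} {v : V}
    (hext : IsExternal fst snd M f) (hv : v ∈ endpts fst snd f)
    (hvVM : v ∈ mVerts fst snd M) : other fst snd v f ∉ mVerts fst snd M := by
  rcases hext with ⟨h1, h2⟩ | ⟨h1, h2⟩
  · rcases mem_endpts_iff.1 hv with h | h
    · rw [other, if_pos h.symm]; exact h2
    · exact absurd (h ▸ hvVM) h2
  · rcases mem_endpts_iff.1 hv with h | h
    · exact absurd (h ▸ hvVM) h1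
    · rw [other, if_neg (fun hc => hloop f (hc.trans h))]
      exact h1

/-- At most 2 edges of a fixed colour can meet a fixed edge `g₁`. -/
lemma card_filter_col_eq_le_two
    (hproper : ∀ e f : E, e ≠ f → (endpts fst snd e ∩ endpts fst snd f).Nonempty → col e ≠ col f)
    (g₁ : E) (S : Finset E)
    (hS : ∀ f' ∈ S, (endpts fst snd f' ∩ endpts fst snd g₁).Nonempty) (d : C) :
    (S.filter (fun f' => col f' = d)).card ≤ 2 := by
  have h2 : (endpts fst snd g₁).card ≤ 2 := endpts_card_le fst snd g₁
  refine le_trans (Finset.card_le_card_of_injOn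
    (fun f' => if hex : (endpts fst snd f' ∩ endpts fst snd g₁).Nonempty
      then hex.choose else fst g₁) ?_ ?_) h2
  · intro f' hf'
    rw [Finset.mem_coe, Finset.mem_filter] at hf'
    dsimp only
    rw [dif_pos (hS f' hf'.1)]
    exact (Finset.mem_inter.1 (hS f' hf'.1).choose_spec).2
  · intro f1 hf1 f2 hf2 heq
    simp only [Finset.coe_filter, Set.mem_setOf_eq] at hf1 hf2
    dsimp only at heq
    rw [dif_pos (hS f1 hf1.1), dif_pos (hS f2 hf2.1)] at heq
    by_contra hne
    refine hproper f1 f2 hne ⟨(hS f1 hf1.1).choose, Finset.mem_inter.2 ⟨?_, ?_⟩⟩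
      (hf1.2.trans hf2.2.symm)
    · exact (Finset.mem_inter.1 (hS f1 hf1.1).choose_spec).1
    · rw [heq]
      exact (Finset.mem_inter.1 (hS f2 hf2.1).choose_spec).1

lemma sum_card_le_two_mul {β : Type*} [DecidableEq β] (S : Finset E) (AW : Finset β)
    (R : E → β → Prop) (hcount : ∀ b ∈ AW, (S.filter (fun f => R f b)).card ≤ 2) :
    ∑ f ∈ S, (AW.filter (R f)).card ≤ 2 * AW.card := by
  calc ∑ f ∈ S, (AW.filter (R f)).card = ∑ f ∈ S, ∑ b ∈ AW, ite (R f b) 1 0 := by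
        refine Finset.sum_congr rfl (fun f _ => ?_)
        rw [Finset.card_filter]
    _ = ∑ b ∈ AW, ∑ f ∈ S, ite (R f b) 1 0 := Finset.sum_comm
    _ ≤ ∑ _b ∈ AW, 2 := Finset.sum_le_sum (fun b hb => by
        rw [← Finset.card_filter]; exact hcount b hb)
    _ = 2 * AW.card := by rw [Finset.sum_const, smul_eq_mul, Nat.mul_comm]

end AuxMore


section SingleFree
set_option linter.unusedSectionVars false
set_option maxHeartbeats 1000000

lemma singleFree {V E C : Type*} [Fintype V] [DecidableEq V] [Fintype E] [DecidableEq E]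
    [Fintype C] [DecidableEq C]
    (k α Θ : ℝ) (n : ℕ)
    (fst snd : E → V) (col : E → C)
    (hloop : ∀ e : E, fst e ≠ snd e)
    (hproper : ∀ e f : E, e ≠ f → (endpts fst snd e ∩ endpts fst snd f).Nonempty →
      col e ≠ col f)
    (hC : Fintype.card C = n)
    (hmult : ∀ u v : V,
      ((Finset.univ.filter fun e : E => endpts fst snd e = ({u, v} : Finset V)).card : ℝ) ≤ n / k)
    (M : Finset E) (hM : IsRainbowMatching fst snd col M)
    (tl : E → V) (htl : ∀ e : E, tl e = fst e ∨ tl e = snd e)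
    (Es : ℕ → Finset E) (Vs : ℕ → Finset V) (Rs : ℕ → Finset C)
    (hVs : ∀ i, Vs i = (Es i).image (hdOf fst snd tl))
    (hRs : ∀ i, Rs i = (Es i).image col)
    (hE1 : Es 1 = E1 fst snd col M α)
    (htl1 : ∀ e ∈ Es 1,
      α * ((Fcols fst snd col M α).card : ℝ) ≤ (goodDeg fst snd col M α (tl e) : ℝ))
    (htli : ∀ i, 2 ≤ i → ∀ e ∈ Es i, reachCond fst snd col M Vs Rs α i (tl e))
    (m : ℕ)
    (hEsM : ∀ j, 1 ≤ j → Es j ⊆ M)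
    (hRcard : ∀ j, 1 ≤ j → j ≤ m → α*(n:ℝ) ≤ ((Rs j).card : ℝ))
    (hF5α : 5*(α^2*(n:ℝ)) ≤ α * ((Fcols fst snd col M α).card : ℝ))
    (hC0k : k ≤ ((C0 col M).card : ℝ))
    (hαpos : 0 < α) (hkpos : 0 < k) (hnk0 : 0 ≤ (n:ℝ)/k)
    (hnum7 : 2*Θ + 2 ≤ α*k/4)
    (hnum9 : (Θ+1) + Θ*((n:ℝ)/k) + (Θ+1)*((n:ℝ)/k) < α^2*(n:ℝ))
    (hnum10 : (Θ+1) + Θ*((n:ℝ)/k) + 8*Θ*(n:ℝ)/(α*k) < 5*(α^2*(n:ℝ))) :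
    ∀ i, 1 ≤ i → i ≤ m → ∀ g ∈ Es i, ∀ (W : Finset V) (D : Finset C),
      (W.card : ℝ) + 3*3^i ≤ Θ → (D.card : ℝ) + 3*3^i ≤ Θ → col g ∉ D →
      ∃ P Q, FreeOut fst snd col M tl W D {g} P Q ∧ (P.card : ℝ) ≤ 3^i := by
  intro i
  induction i using Nat.strong_induction_on with
  | _ i IH =>
  intro hi1 him g hg W D hWbud hDbud hgD
  have h3pos : (0:ℝ) < 3^i := by positivity
  have h3i1 : (1:ℝ) ≤ (3:ℝ)^i := by
    have := pow_le_pow_left₀ (by norm_num : (0:ℝ) ≤ 1) (by norm_num : (1:ℝ) ≤ 3) i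
    simpa using this
  have hWΘ : (W.card:ℝ) ≤ Θ := by linarith
  have hDΘ : (D.card:ℝ) ≤ Θ := by linarith
  have hgM : g ∈ M := hEsM i hi1 hg
  have htg : tl g ∈ endpts fst snd g := tl_mem_endpts htl g
  have htVM : tl g ∈ mVerts fst snd M := endpts_subset_mVerts hgM htg
  rcases eq_or_lt_of_le hi1 with hi1' | hi2
  · -- base case : i = 1
    subst hi1'
    have hgE1 : g ∈ Es 1 := hg
    have hGTlow := htl1 g hgE1
    set t := tl g with htdef
    set GT := Finset.univ.filter
      (fun f : E => IsGood fst snd col M α f ∧ t ∈ endpts fst snd f) with hGTdef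
    have hGTcard : 5*(α^2*(n:ℝ)) ≤ (GT.card : ℝ) := by
      have hGTeq : (goodDeg fst snd col M α t : ℝ) = (GT.card : ℝ) := by rw [goodDeg]
      linarith [hF5α, hGTlow, hGTeq]
    have hGTt : ∀ f ∈ GT, t ∈ endpts fst snd f := fun f hf => (Finset.mem_filter.1 hf).2.2
    set B1 := GT.filter (fun f => col f ∈ insert (col g) D) with hB1def
    set B2 := GT.filter (fun f => other fst snd t f ∈ W) with hB2def
    set AW := Finset.univ.filter
      (fun f' : E => ∃ w ∈ W, w ∈ endpts fst snd f' ∧ w ∉ mVerts fst snd M) with hAWdef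
    obtain ⟨R, hRdef⟩ : ∃ R : E → E → Prop, R = fun f f' => col f' ∈ C0 col M ∧
        ∃ h ∈ M, col h = col f ∧ (endpts fst snd f' ∩ endpts fst snd h).Nonempty := ⟨_, rfl⟩
    set B3 := GT.filter
      (fun f => α * ((C0 col M).card:ℝ)/4 ≤ ((AW.filter (R f)).card : ℝ)) with hB3def
    have hB1card : (B1.card : ℝ) ≤ (D.card : ℝ) + 1 := by
      have h := card_filter_col_mem_le hproper t GT hGTt (insert (col g) D)
      have h2 : (insert (col g) D).card ≤ D.card + 1 := Finset.card_insert_le _ _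
      exact_mod_cast le_trans h h2
    have hB2card : (B2.card : ℝ) ≤ W.card * ((n:ℝ)/k) :=
      card_filter_other_mem_le hmult hnk0 t W GT hGTt
    have hAWcard : (AW.card : ℝ) ≤ (W.card : ℝ) * n := by
      have hsub : AW ⊆ W.biUnion
          (fun w => Finset.univ.filter (fun f' : E => w ∈ endpts fst snd f')) := by
        intro f' hf'
        rw [hAWdef, Finset.mem_filter] at hf'
        obtain ⟨w, hwW, hwf, -⟩ := hf'.2
        exact Finset.mem_biUnion.2 ⟨w, hwW, Finset.mem_filter.2 ⟨Finset.mem_univ _, hwf⟩⟩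
      have h3 : ∀ w ∈ W,
          ((Finset.univ.filter (fun f' : E => w ∈ endpts fst snd f')).card : ℝ) ≤ n := by
        intro w _
        have := deg_le_card (col := col) hproper w
          (Finset.univ.filter (fun f' : E => w ∈ endpts fst snd f'))
          (fun f hf => (Finset.mem_filter.1 hf).2)
        rw [hC] at this
        exact_mod_cast this
      calc (AW.card : ℝ) ≤ ((W.biUnion
          (fun w => Finset.univ.filter (fun f' : E => w ∈ endpts fst snd f'))).card : ℝ) := by
            exact_mod_cast Finset.card_le_card hsub
        _ ≤ ∑ w ∈ W, ((Finset.univ.filter (fun f' : E => w ∈ endpts fst snd f')).card : ℝ) := by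
            rw [← Nat.cast_sum]
            exact_mod_cast Finset.card_biUnion_le
        _ ≤ ∑ _w ∈ W, (n:ℝ) := Finset.sum_le_sum h3
        _ = W.card * n := by rw [Finset.sum_const]; ring
    have hB3per : ∀ f' ∈ AW, (B3.filter (fun f => R f f')).card ≤ 2 := by
      intro f' _
      have h2 : (endpts fst snd f').card ≤ 2 := endpts_card_le fst snd f'
      refine le_trans (Finset.card_le_card_of_injOn
        (fun f => if hex : ∃ v ∈ endpts fst snd f', ∃ h ∈ M, v ∈ endpts fst snd h ∧ col h = col f
          then hex.choose else t) ?_ ?_) h2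
      · intro f hf
        rw [Finset.mem_coe, Finset.mem_filter] at hf
        have hR := hf.2
        rw [hRdef] at hR
        obtain ⟨hc0, h, hhM, hcolh, hmeet⟩ := hR
        obtain ⟨v, hv⟩ := hmeet
        rw [Finset.mem_inter] at hv
        have hex : ∃ v ∈ endpts fst snd f', ∃ h ∈ M, v ∈ endpts fst snd h ∧ col h = col f :=
          ⟨v, hv.1, h, hhM, hv.2, hcolh⟩
        dsimp only
        rw [dif_pos hex]
        exact hex.choose_spec.1
      · intro f1 hf1 f2 hf2 heq
        simp only [Finset.coe_filter, Set.mem_setOf_eq] at hf1 hf2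
        have hR1 := hf1.2
        rw [hRdef] at hR1
        obtain ⟨hc01, h1, h1M, hcol1, hmeet1⟩ := hR1
        obtain ⟨v1, hv1⟩ := hmeet1
        rw [Finset.mem_inter] at hv1
        have hex1 : ∃ v ∈ endpts fst snd f', ∃ h ∈ M, v ∈ endpts fst snd h ∧ col h = col f1 :=
          ⟨v1, hv1.1, h1, h1M, hv1.2, hcol1⟩
        have hR2 := hf2.2
        rw [hRdef] at hR2
        obtain ⟨hc02, h2', h2M, hcol2, hmeet2⟩ := hR2
        obtain ⟨v2, hv2⟩ := hmeet2
        rw [Finset.mem_inter] at hv2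
        have hex2 : ∃ v ∈ endpts fst snd f', ∃ h ∈ M, v ∈ endpts fst snd h ∧ col h = col f2 :=
          ⟨v2, hv2.1, h2', h2M, hv2.2, hcol2⟩
        dsimp only at heq
        rw [dif_pos hex1, dif_pos hex2] at heq
        obtain ⟨-, hh1, hh1M, hvh1, hch1⟩ := hex1.choose_spec
        obtain ⟨-, hh2, hh2M, hvh2, hch2⟩ := hex2.choose_spec
        have hheq : hh1 = hh2 := match_unique hM hh1M hh2M hvh1 (heq ▸ hvh2)
        have hcoleq : col f1 = col f2 := by rw [← hch1, hheq, hch2]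
        by_contra hne
        refine hproper f1 f2 hne ⟨t, Finset.mem_inter.2 ⟨?_, ?_⟩⟩ hcoleq
        · exact hGTt f1 (Finset.mem_filter.1 hf1.1).1
        · exact hGTt f2 (Finset.mem_filter.1 hf2.1).1
    have hC0pos : (0:ℝ) < ((C0 col M).card:ℝ) := lt_of_lt_of_le hkpos hC0k
    have hB3sum : (B3.card : ℝ) * (α * ((C0 col M).card:ℝ)/4) ≤ 2*((W.card:ℝ)*(n:ℝ)) := by
      have h1 : ∀ f ∈ B3, α*((C0 col M).card:ℝ)/4 ≤ ((AW.filter (R f)).card : ℝ) :=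
        fun f hf => (Finset.mem_filter.1 hf).2
      have h2 := Finset.card_nsmul_le_sum B3
        (fun f => ((AW.filter (R f)).card : ℝ)) (α*((C0 col M).card:ℝ)/4) h1
      rw [nsmul_eq_mul] at h2
      have h3 : ∑ f ∈ B3, ((AW.filter (R f)).card : ℝ) ≤ 2*(AW.card:ℝ) := by
        have h4 := sum_card_le_two_mul B3 AW R hB3per
        have h5 : ∑ f ∈ B3, ((AW.filter (R f)).card : ℝ)
            = ((∑ f ∈ B3, (AW.filter (R f)).card : ℕ) : ℝ) := by
          rw [Nat.cast_sum]
        rw [h5]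
        exact_mod_cast h4
      have h6 : 2*(AW.card:ℝ) ≤ 2*((W.card:ℝ)*(n:ℝ)) := by linarith
      linarith
    have hB3card : (B3.card:ℝ) ≤ 8*Θ*(n:ℝ)/(α*k) := by
      rw [le_div_iff₀ (mul_pos hαpos hkpos)]
      have e0 : (0:ℝ) ≤ (B3.card:ℝ) := Nat.cast_nonneg _
      have e1 : (B3.card:ℝ)*(α*k/4) ≤ (B3.card:ℝ)*(α*((C0 col M).card:ℝ)/4) := by
        refine mul_le_mul_of_nonneg_left ?_ e0
        nlinarith
      have e2 : 2*((W.card:ℝ)*(n:ℝ)) ≤ 2*(Θ*(n:ℝ)) := by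
        have : (0:ℝ) ≤ (n:ℝ) := Nat.cast_nonneg _
        nlinarith
      linarith
    have hblock : (B1.card:ℝ) + B2.card + B3.card < GT.card := by
      have b2 : (B2.card:ℝ) ≤ Θ*((n:ℝ)/k) :=
        le_trans hB2card (mul_le_mul_of_nonneg_right hWΘ hnk0)
      linarith
    obtain ⟨f, hfGT, hfB1, hfB2, hfB3⟩ := exists_unblocked hblock
    have hfGT' := hfGT
    rw [hGTdef, Finset.mem_filter] at hfGT'
    obtain ⟨-, hfGood, htf⟩ := hfGT'
    have hcolfD : col f ∉ insert (col g) D := fun h => hfB1 (Finset.mem_filter.2 ⟨hfGT, h⟩)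
    have hcolfg : col f ≠ col g := fun h => hcolfD (h ▸ Finset.mem_insert_self _ _)
    have hfW : other fst snd t f ∉ W := fun h => hfB2 (Finset.mem_filter.2 ⟨hfGT, h⟩)
    have hunspoiled : ((AW.filter (R f)).card : ℝ) < α * ((C0 col M).card:ℝ)/4 := by
      by_contra hcon
      push_neg at hcon
      exact hfB3 (Finset.mem_filter.2 ⟨hfGT, hcon⟩)
    obtain ⟨hext, hcolF, g₁, hg₁M, hcolg₁, hWS⟩ := hfGood
    set WS := Finset.univ.filter (fun f' : E => IsExternal fst snd M f' ∧
      col f' ∈ C0 col M ∧ (endpts fst snd f' ∩ endpts fst snd g₁).Nonempty ∧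
      endpts fst snd f' ∩ endpts fst snd f = ∅) with hWSdef
    have hWSg₁ : ∀ f' ∈ WS, (endpts fst snd f' ∩ endpts fst snd g₁).Nonempty :=
      fun f' hf' => (Finset.mem_filter.1 hf').2.2.2.1
    set WB1 := WS.filter (fun f' => col f' ∈ D) with hWB1def
    set WB2 := WS.filter
      (fun f' => ∃ w ∈ W, w ∈ endpts fst snd f' ∧ w ∉ mVerts fst snd M) with hWB2def
    have hWB1card : (WB1.card:ℝ) ≤ 2*(D.card:ℝ) := by
      have hsub : WB1 ⊆ D.biUnion (fun d => WS.filter (fun f' => col f' = d)) := by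
        intro f' hf'
        rw [hWB1def, Finset.mem_filter] at hf'
        exact Finset.mem_biUnion.2 ⟨col f', hf'.2, Finset.mem_filter.2 ⟨hf'.1, rfl⟩⟩
      calc (WB1.card:ℝ) ≤ ((D.biUnion (fun d => WS.filter (fun f' => col f' = d))).card : ℝ) := by
            exact_mod_cast Finset.card_le_card hsub
        _ ≤ ∑ d ∈ D, ((WS.filter (fun f' => col f' = d)).card : ℝ) := by
            rw [← Nat.cast_sum]
            exact_mod_cast Finset.card_biUnion_le
        _ ≤ ∑ _d ∈ D, (2:ℝ) := Finset.sum_le_sum (fun d _ => by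
            exact_mod_cast card_filter_col_eq_le_two hproper g₁ WS hWSg₁ d)
        _ = 2*(D.card:ℝ) := by rw [Finset.sum_const]; push_cast; ring
    have hWB2card : (WB2.card:ℝ) < α * ((C0 col M).card:ℝ)/4 := by
      refine lt_of_le_of_lt ?_ hunspoiled
      have hsub : WB2 ⊆ AW.filter (R f) := by
        intro f' hf'
        rw [hWB2def, Finset.mem_filter] at hf'
        have hf'WS := hf'.1
        rw [hWSdef, Finset.mem_filter] at hf'WS
        refine Finset.mem_filter.2 ⟨?_, ?_⟩
        · rw [hAWdef, Finset.mem_filter]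
          exact ⟨Finset.mem_univ _, hf'.2⟩
        · rw [hRdef]
          exact ⟨hf'WS.2.2.1, g₁, hg₁M, hcolg₁, hf'WS.2.2.2.1⟩
      exact_mod_cast Finset.card_le_card hsub
    have hchoosef' : (WB1.card:ℝ) + WB2.card + ((∅ : Finset E).card : ℝ) < WS.card := by
      have hc1 : 2*Θ + 2 ≤ α*((C0 col M).card:ℝ)/4 := by nlinarith
      simp only [Finset.card_empty, Nat.cast_zero, add_zero]
      linarith
    obtain ⟨f', hf'WS, hf'WB1, hf'WB2, -⟩ := exists_unblocked hchoosef'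
    have hf'WS' := hf'WS
    rw [hWSdef, Finset.mem_filter] at hf'WS'
    obtain ⟨-, hext', hcolC0', hmeet, hdisjff'⟩ := hf'WS'
    have hcolf'D : col f' ∉ D := fun h => hf'WB1 (Finset.mem_filter.2 ⟨hf'WS, h⟩)
    obtain ⟨x, hx⟩ := hmeet
    rw [Finset.mem_inter] at hx
    have hxVM : x ∈ mVerts fst snd M := endpts_subset_mVerts hg₁M hx.2
    have hyVM : other fst snd x f' ∉ mVerts fst snd M :=
      external_other_not_VM hloop hext' hx.1 hxVM
    have hyW : other fst snd x f' ∉ W := fun hw =>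
      hf'WB2 (Finset.mem_filter.2 ⟨hf'WS, other fst snd x f', hw, other_mem, hyVM⟩)
    have hg₁g : g₁ ≠ g := by
      intro hc
      refine hcolfg ?_
      rw [← hcolg₁, hc]
    set u := other fst snd t f with hudef
    have huVM : u ∉ mVerts fst snd M := external_other_not_VM hloop hext htf htVM
    have hfM : f ∉ M := fun hmem => huVM (endpts_subset_mVerts hmem other_mem)
    have hf'M : f' ∉ M := fun hmem => hyVM (endpts_subset_mVerts hmem other_mem)
    have hcolff' : col f ≠ col f' := by
      intro hc
      have : col g₁ ∈ C0 col M := by rw [hcolg₁, hc]; exact hcolC0'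
      exact col_notin_C0 hg₁M this
    have hff' : f ≠ f' := fun hc => hcolff' (hc ▸ rfl)
    have hgg₁ : g ∉ ({g₁} : Finset E) := by
      rw [Finset.mem_singleton]
      exact fun hc => hg₁g hc.symm
    have hff's : f ∉ ({f'} : Finset E) := by
      rw [Finset.mem_singleton]
      exact hff'
    refine ⟨insert g {g₁}, insert f {f'}, ⟨?_, ?_, ?_, ?_, ?_, ?_, ?_, ?_, ?_⟩, ?_⟩
    · exact Finset.insert_subset hgM (Finset.singleton_subset_iff.2 hg₁M)
    · intro z hz
      rw [Finset.mem_singleton.1 hz]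
      exact Finset.mem_insert_self _ _
    · intro p hp
      rcases Finset.mem_insert.1 hp with rfl | hp
      · exact hgD
      · rw [Finset.mem_singleton.1 hp, hcolg₁]
        exact fun hd => hcolfD (Finset.mem_insert_of_mem hd)
    · rw [Finset.card_insert_of_notMem hff's, Finset.card_insert_of_notMem hgg₁]
      simp
    · intro q hq
      rcases Finset.mem_insert.1 hq with rfl | hq
      · exact hfM
      · rw [Finset.mem_singleton.1 hq]
        exact hf'M
    · intro q hq q' hq' hne
      rcases Finset.mem_insert.1 hq with hqf | hq
      · rcases Finset.mem_insert.1 hq' with hq'f | hq'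
        · exact absurd (hqf.trans hq'f.symm) hne
        · rw [hqf, Finset.mem_singleton.1 hq', Finset.inter_comm]
          exact hdisjff'
      · rcases Finset.mem_insert.1 hq' with hq'f | hq'
        · rw [Finset.mem_singleton.1 hq, hq'f]
          exact hdisjff'
        · exact absurd ((Finset.mem_singleton.1 hq).trans
            (Finset.mem_singleton.1 hq').symm) hne
    · intro q hq q' hq' hcoleq
      rcases Finset.mem_insert.1 hq with hqf | hq
      · rcases Finset.mem_insert.1 hq' with hq'f | hq'
        · rw [hqf, hq'f]
        · exfalso
          rw [hqf, Finset.mem_singleton.1 hq'] at hcoleq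
          exact hcolff' hcoleq
      · rcases Finset.mem_insert.1 hq' with hq'f | hq'
        · exfalso
          rw [hq'f, Finset.mem_singleton.1 hq] at hcoleq
          exact hcolff' hcoleq.symm
        · rw [Finset.mem_singleton.1 hq, Finset.mem_singleton.1 hq']
    · intro q hq v hv
      rcases Finset.mem_insert.1 hq with hqf | hq
      · rw [hqf] at hv
        rcases mem_endpts_cases htf hv with hvt | hvu
        · refine Or.inl ⟨mem_mVerts.2 ⟨g, Finset.mem_insert_self _ _, by rw [hvt]; exact htg⟩, ?_⟩
          intro gg hgg
          rw [Finset.mem_singleton.1 hgg, hvt]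
          exact fun hc => (hdOf_ne_tl hloop htl g) hc.symm
        · rw [hvu]
          exact Or.inr ⟨huVM, hfW⟩
      · rw [Finset.mem_singleton.1 hq] at hv
        rcases mem_endpts_cases hx.1 hv with hvx | hvy
        · refine Or.inl ⟨mem_mVerts.2 ⟨g₁, Finset.mem_insert_of_mem (Finset.mem_singleton_self _),
            by rw [hvx]; exact hx.2⟩, ?_⟩
          intro gg hgg
          rw [Finset.mem_singleton.1 hgg, hvx]
          intro hc
          have hxg : x ∈ endpts fst snd g := hc ▸ hdOf_mem_endpts tl g
          exact hg₁g (match_unique hM hg₁M hgM hx.2 hxg)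
        · rw [hvy]
          exact Or.inr ⟨hyVM, hyW⟩
    · intro q hq
      rcases Finset.mem_insert.1 hq with hqf | hq
      · refine Or.inl ⟨?_, ?_⟩
        · rw [hqf, ← hcolg₁]
          exact Finset.mem_image_of_mem col
            (Finset.mem_insert_of_mem (Finset.mem_singleton_self _))
        · intro gg hgg
          rw [Finset.mem_singleton.1 hgg, hqf]
          exact hcolfg
      · rw [Finset.mem_singleton.1 hq]
        exact Or.inr ⟨hcolC0', hcolf'D⟩
    · rw [Finset.card_insert_of_notMem hgg₁]
      norm_num
  · -- inductive case : 2 ≤ i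
    have hi2' : 2 ≤ i := hi2
    obtain ⟨j, hjIoo, hjcount⟩ := htli i hi2' g hg
    have hj1 : 1 ≤ j := (Finset.mem_Ioo.1 hjIoo).1
    have hji : j < i := (Finset.mem_Ioo.1 hjIoo).2
    have hjm : j ≤ m := le_trans (Nat.le_of_lt_succ (by omega)) him
    set t := tl g with htdef
    set cand := Finset.univ.filter (fun f : E => t ∈ endpts fst snd f ∧ col f ∈ Rs j ∧
      other fst snd t f ∈ (Finset.univ \ mVerts fst snd M) ∪ (Finset.Ioo 0 i).biUnion Vs)
      with hcanddef
    have hcandlow : α^2*(n:ℝ) ≤ (cand.card : ℝ) := by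
      have h1 := hRcard j hj1 hjm
      have h2 := mul_le_mul_of_nonneg_left h1 hαpos.le
      calc α^2*(n:ℝ) = α*(α*n) := by ring
      _ ≤ α * ((Rs j).card : ℝ) := h2
      _ ≤ (cand.card : ℝ) := hjcount
    have hcandt : ∀ f ∈ cand, t ∈ endpts fst snd f := fun f hf => (Finset.mem_filter.1 hf).2.1
    set B1 := cand.filter (fun f => col f ∈ insert (col g) D) with hB1def
    set B2 := cand.filter (fun f => other fst snd t f ∈ W) with hB2def
    set B3 := cand.filter (fun f => ∃ h ∈ M, col h ∈ insert (col g) D ∧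
      other fst snd t f = hdOf fst snd tl h) with hB3def
    have hB1card : (B1.card : ℝ) ≤ (D.card : ℝ) + 1 := by
      have h := card_filter_col_mem_le hproper t cand hcandt (insert (col g) D)
      have h2 : (insert (col g) D).card ≤ D.card + 1 := Finset.card_insert_le _ _
      exact_mod_cast le_trans h h2
    have hB2card : (B2.card : ℝ) ≤ W.card * ((n:ℝ)/k) :=
      card_filter_other_mem_le hmult hnk0 t W cand hcandt
    have hB3card : (B3.card : ℝ) ≤ ((D.card:ℝ) + 1) * ((n:ℝ)/k) := by
      have h := card_filter_other_head_le hmult hnk0 hM tl t (insert (col g) D) cand hcandt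
      have h2 : ((insert (col g) D).card : ℝ) ≤ (D.card:ℝ) + 1 := by
        exact_mod_cast Finset.card_insert_le _ _
      have h3 : B3 = cand.filter (fun f => ∃ h ∈ M, col h ∈ insert (col g) D ∧
          other fst snd t f = hdOf fst snd tl h) := hB3def
      calc (B3.card : ℝ) ≤ ((insert (col g) D).card : ℝ) * ((n:ℝ)/k) := by rw [h3]; exact h
      _ ≤ ((D.card:ℝ) + 1) * ((n:ℝ)/k) := mul_le_mul_of_nonneg_right h2 hnk0
    have hblock : (B1.card:ℝ) + B2.card + B3.card < cand.card := by
      have b2 : (B2.card:ℝ) ≤ Θ*((n:ℝ)/k) :=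
        le_trans hB2card (mul_le_mul_of_nonneg_right hWΘ hnk0)
      have b3 : (B3.card:ℝ) ≤ (Θ+1)*((n:ℝ)/k) := by
        refine le_trans hB3card (mul_le_mul_of_nonneg_right (by linarith) hnk0)
      linarith
    obtain ⟨f, hfcand, hfB1, hfB2, hfB3⟩ := exists_unblocked hblock
    have hfc := hfcand
    rw [hcanddef, Finset.mem_filter] at hfc
    obtain ⟨-, htf, hcolfR, hufull⟩ := hfc
    have hcolfD : col f ∉ insert (col g) D := fun h =>
      hfB1 (Finset.mem_filter.2 ⟨hfcand, h⟩)
    have hcolfg : col f ≠ col g := fun h => hcolfD (h ▸ Finset.mem_insert_self _ _)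
    have hfW : other fst snd t f ∉ W := fun h =>
      hfB2 (Finset.mem_filter.2 ⟨hfcand, h⟩)
    have hfHead : ¬ ∃ h ∈ M, col h ∈ insert (col g) D ∧
        other fst snd t f = hdOf fst snd tl h := fun h =>
      hfB3 (Finset.mem_filter.2 ⟨hfcand, h⟩)
    -- the matching edge of colour col f
    have hcolfim : col f ∈ (Es j).image col := by rw [← hRs j]; exact hcolfR
    obtain ⟨g', hg'Es, hcolg'⟩ := Finset.mem_image.1 hcolfim
    have hg'M : g' ∈ M := hEsM j hj1 hg'Es
    have hg'A : g' ∈ (Finset.Ioo 0 i).biUnion Es := Finset.mem_biUnion.2 ⟨j, hjIoo, hg'Es⟩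
    set u := other fst snd t f with hudef
    have huf : u ∈ endpts fst snd f := other_mem
    have hut : u ≠ t := other_ne hloop htf
    have hfM : f ∉ M := by
      intro hfMmem
      have : f = g := match_unique hM hfMmem hgM htf htg
      exact hcolfg (this ▸ rfl)
    -- the head-edge in case u ∈ V(M)
    have hucase : u ∉ mVerts fst snd M ∨
        ∃ j' ∈ Finset.Ioo 0 i, ∃ h ∈ Es j', hdOf fst snd tl h = u := by
      rcases Finset.mem_union.1 hufull with h | h
      · exact Or.inl (Finset.mem_sdiff.1 h).2
      · obtain ⟨j', hj', huj'⟩ := Finset.mem_biUnion.1 h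
        rw [hVs j'] at huj'
        obtain ⟨h, hhEs, hhd⟩ := Finset.mem_image.1 huj'
        exact Or.inr ⟨j', hj', h, hhEs, hhd⟩
    -- set up the multiFree call
    set Bi : ℝ := 3^(i-1) with hBidef
    have hBi1 : (1:ℝ) ≤ Bi := by
      rw [hBidef]
      have := pow_le_pow_left₀ (by norm_num : (0:ℝ) ≤ 1) (by norm_num : (1:ℝ) ≤ 3) (i-1)
      simpa using this
    have h3split : (3:ℝ)^i = 3 * Bi := by
      rw [hBidef, ← pow_succ']
      congr 1
      omega
    have hAsubM : (Finset.Ioo 0 i).biUnion Es ⊆ M := by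
      intro x hx
      obtain ⟨j', hj', hxj'⟩ := Finset.mem_biUnion.1 hx
      exact hEsM j' (Finset.mem_Ioo.1 hj').1 hxj'
    have horc : ∀ gg ∈ (Finset.Ioo 0 i).biUnion Es, ∀ (W' : Finset V) (D' : Finset C),
        (W'.card : ℝ) + 3*Bi ≤ Θ → (D'.card : ℝ) + 3*Bi ≤ Θ → col gg ∉ D' →
        ∃ P Q, FreeOut fst snd col M tl W' D' {gg} P Q ∧ (P.card : ℝ) ≤ Bi := by
      intro gg hgg W' D' hW' hD' hcolgg
      obtain ⟨jj, hjj, hggEs⟩ := Finset.mem_biUnion.1 hgg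
      have hjj1 : 1 ≤ jj := (Finset.mem_Ioo.1 hjj).1
      have hjji : jj < i := (Finset.mem_Ioo.1 hjj).2
      have hjjm : jj ≤ m := by omega
      have hpow : (3:ℝ)^jj ≤ Bi := by
        rw [hBidef]
        exact pow_le_pow_right₀ (by norm_num : (1:ℝ) ≤ 3) (by omega)
      obtain ⟨P, Q, hF, hcard⟩ := IH jj hjji hjj1 hjjm gg hggEs W' D'
        (by linarith) (by linarith) hcolgg
      exact ⟨P, Q, hF, le_trans hcard hpow⟩
    -- targets
    rcases hucase with huVM | ⟨j', hj', h, hhEs, hhd⟩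
    · -- u outside V(M) : only free g'
      have hTsub : ({g'} : Finset E) ⊆ (Finset.Ioo 0 i).biUnion Es := by
        intro x hx; rw [Finset.mem_singleton.1 hx]; exact hg'A
      have hWsub : ((insert u W).card : ℝ) + ({g'} : Finset E).card * (4*Bi) ≤ Θ := by
        have h1 : ((insert u W).card : ℝ) ≤ W.card + 1 := by
          exact_mod_cast Finset.card_insert_le _ _
        simp only [Finset.card_singleton]
        push_cast
        rw [h3split] at hWbud
        nlinarith
      have hDsub : ((insert (col g) D).card : ℝ) + ({g'} : Finset E).card * (4*Bi) ≤ Θ := by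
        have h1 : ((insert (col g) D).card : ℝ) ≤ D.card + 1 := by
          exact_mod_cast Finset.card_insert_le _ _
        simp only [Finset.card_singleton]
        push_cast
        rw [h3split] at hDbud
        nlinarith
      have hTD : ∀ gg ∈ ({g'} : Finset E), col gg ∉ insert (col g) D := by
        intro gg hgg
        rw [Finset.mem_singleton.1 hgg, hcolg']
        exact hcolfD
      obtain ⟨Ps, Qs, hFs, hPscard⟩ := multiFree hM hBi1 hAsubM horc {g'} hTsub
        (insert u W) (insert (col g) D) hWsub hDsub hTD
      obtain ⟨hPsM, hTPs, hPsD, hQscard, hQsM, hQsdisj, hQscolinj, hQsv, hQsc⟩ := hFs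
      have hg'Ps : g' ∈ Ps := hTPs (Finset.mem_singleton_self g')
      have hgPs : g ∉ Ps := fun hmem =>
        hPsD g hmem (Finset.mem_insert_self (col g) D)
      have hfQs : f ∉ Qs := by
        intro hmem
        rcases hQsc f hmem with ⟨h1, h2⟩ | ⟨h1, _⟩
        · exact h2 g' (Finset.mem_singleton_self g') hcolg'.symm
        · exact col_notin_C0 hg'M (hcolg' ▸ h1)
      have hcrossf : ∀ q ∈ Qs, endpts fst snd f ∩ endpts fst snd q = ∅ := by
        intro q hq
        rw [Finset.eq_empty_iff_forall_notMem]
        intro v hv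
        rw [Finset.mem_inter] at hv
        rcases mem_endpts_cases htf hv.1 with hvt | hvu
        · rcases hQsv q hq v hv.2 with ⟨h1, _⟩ | ⟨h1, _⟩
          · obtain ⟨p, hp, hvp⟩ := mem_mVerts.1 h1
            have : p = g := match_unique hM (hPsM hp) hgM hvp (by rw [hvt]; exact htg)
            exact hgPs (this ▸ hp)
          · exact h1 (by rw [hvt]; exact htVM)
        · rcases hQsv q hq v hv.2 with ⟨h1, _⟩ | ⟨_, h2⟩
          · obtain ⟨p, hp, hvp⟩ := mem_mVerts.1 h1
            have hu2 : other fst snd t f ∈ mVerts fst snd M := by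
              rw [← hvu]
              exact endpts_subset_mVerts (hPsM hp) hvp
            exact huVM hu2
          · exact h2 (by rw [hvu]; exact Finset.mem_insert_self u W)
      refine ⟨insert g Ps, insert f Qs, ⟨?_, ?_, ?_, ?_, ?_, ?_, ?_, ?_, ?_⟩, ?_⟩
      · exact Finset.insert_subset hgM hPsM
      · intro x hx
        rw [Finset.mem_singleton.1 hx]
        exact Finset.mem_insert_self g Ps
      · intro p hp
        rcases Finset.mem_insert.1 hp with rfl | hp
        · exact hgD
        · exact fun hd => hPsD p hp (Finset.mem_insert_of_mem hd)
      · rw [Finset.card_insert_of_notMem hfQs, Finset.card_insert_of_notMem hgPs, hQscard]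
      · intro q hq
        rcases Finset.mem_insert.1 hq with rfl | hq
        · exact hfM
        · exact hQsM q hq
      · intro q hq q' hq' hne
        rcases Finset.mem_insert.1 hq with hqf | hq
        · rcases Finset.mem_insert.1 hq' with hq'f | hq'
          · exact absurd (hqf.trans hq'f.symm) hne
          · rw [hqf]; exact hcrossf q' hq'
        · rcases Finset.mem_insert.1 hq' with hq'f | hq'
          · rw [hq'f, Finset.inter_comm]; exact hcrossf q hq
          · exact hQsdisj q hq q' hq' hne
      · intro q hq q' hq' hcoleq
        rcases Finset.mem_insert.1 hq with hqf | hq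
        · rcases Finset.mem_insert.1 hq' with hq'f | hq'
          · rw [hqf, hq'f]
          · exfalso
            rcases hQsc q' hq' with ⟨h1, h2⟩ | ⟨h1, _⟩
            · exact h2 g' (Finset.mem_singleton_self g') (by rw [← hcoleq, hqf, hcolg'])
            · have hcg : col g' ∈ C0 col M := by rw [hcolg', ← hqf, hcoleq]; exact h1
              exact col_notin_C0 hg'M hcg
        · rcases Finset.mem_insert.1 hq' with hq'f | hq'
          · exfalso
            rcases hQsc q hq with ⟨h1, h2⟩ | ⟨h1, _⟩
            · exact h2 g' (Finset.mem_singleton_self g') (by rw [hcoleq, hq'f, hcolg'])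
            · have hcg : col g' ∈ C0 col M := by rw [hcolg', ← hq'f, ← hcoleq]; exact h1
              exact col_notin_C0 hg'M hcg
          · exact hQscolinj q hq q' hq' hcoleq
      · intro q hq v hv
        rcases Finset.mem_insert.1 hq with hqf | hq
        · rw [hqf] at hv
          rcases mem_endpts_cases htf hv with hvt | hvu
          · refine Or.inl ⟨mem_mVerts.2 ⟨g, Finset.mem_insert_self g Ps, by rw [hvt]; exact htg⟩, ?_⟩
            intro gg hgg
            rw [Finset.mem_singleton.1 hgg, hvt]
            exact fun hc => (hdOf_ne_tl hloop htl g) hc.symm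
          · rw [hvu]
            exact Or.inr ⟨huVM, hfW⟩
        · rcases hQsv q hq v hv with ⟨h1, h2⟩ | ⟨h1, h2⟩
          · refine Or.inl ⟨Finset.biUnion_subset_biUnion_of_subset_left _
              (Finset.subset_insert g Ps) h1, ?_⟩
            intro gg hgg
            rw [Finset.mem_singleton.1 hgg]
            intro hveq
            obtain ⟨p, hp, hvp⟩ := mem_mVerts.1 h1
            have hvg : v ∈ endpts fst snd g := hveq ▸ hdOf_mem_endpts tl g
            have : p = g := match_unique hM (hPsM hp) hgM hvp hvg
            exact hgPs (this ▸ hp)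
          · exact Or.inr ⟨h1, fun hmem => h2 (Finset.mem_insert_of_mem hmem)⟩
      · intro q hq
        rcases Finset.mem_insert.1 hq with rfl | hq
        · refine Or.inl ⟨?_, ?_⟩
          · rw [← hcolg']
            exact Finset.mem_image_of_mem col (Finset.mem_insert_of_mem hg'Ps)
          · intro gg hgg
            rw [Finset.mem_singleton.1 hgg]
            exact hcolfg
        · rcases hQsc q hq with ⟨h1, h2⟩ | ⟨h1, h2⟩
          · refine Or.inl ⟨?_, ?_⟩
            · obtain ⟨p, hp, hcolp⟩ := Finset.mem_image.1 h1
              exact hcolp ▸ Finset.mem_image_of_mem col (Finset.mem_insert_of_mem hp)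
            · intro gg hgg hcoleq
              rw [Finset.mem_singleton.1 hgg] at hcoleq
              obtain ⟨p, hp, hcolp⟩ := Finset.mem_image.1 h1
              exact hPsD p hp (by rw [hcolp, hcoleq]; exact Finset.mem_insert_self _ _)
          · exact Or.inr ⟨h1, fun hmem => h2 (Finset.mem_insert_of_mem hmem)⟩
      · rw [Finset.card_insert_of_notMem hgPs]
        push_cast
        have : (Ps.card : ℝ) ≤ Bi := by
          simpa using hPscard
        rw [h3split]
        linarith
    · -- u = head of h ∈ Es j'
      have hj'1 : 1 ≤ j' := (Finset.mem_Ioo.1 hj').1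
      have hhM : h ∈ M := hEsM j' hj'1 hhEs
      have hhA : h ∈ (Finset.Ioo 0 i).biUnion Es := Finset.mem_biUnion.2 ⟨j', hj', hhEs⟩
      have huVM : u ∈ mVerts fst snd M := by
        rw [← hhd]
        exact endpts_subset_mVerts hhM (hdOf_mem_endpts tl h)
      have hcolh : col h ∉ insert (col g) D := by
        intro hmem
        exact hfHead ⟨h, hhM, hmem, hhd.symm⟩
      have hcolhg : col h ≠ col g := fun hc => hcolh (hc ▸ Finset.mem_insert_self _ _)
      have hhg : h ≠ g := fun hc => hcolhg (hc ▸ rfl)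
      set Tsub : Finset E := insert g' {h} with hTsubdef
      have hTsub : Tsub ⊆ (Finset.Ioo 0 i).biUnion Es := by
        intro x hx
        rcases Finset.mem_insert.1 hx with rfl | hx
        · exact hg'A
        · rw [Finset.mem_singleton.1 hx]
          exact hhA
      have hTsub2 : (Tsub.card : ℝ) ≤ 2 := by
        have := Finset.card_insert_le g' ({h} : Finset E)
        have h2 : Tsub.card ≤ 2 := by
          rw [hTsubdef]
          simpa using this
        exact_mod_cast h2
      have hTsubnn : (0:ℝ) ≤ (Tsub.card : ℝ) := Nat.cast_nonneg _
      have hWsub : ((insert u W).card : ℝ) + Tsub.card * (4*Bi) ≤ Θ := by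
        have h1 : ((insert u W).card : ℝ) ≤ W.card + 1 := by
          exact_mod_cast Finset.card_insert_le _ _
        rw [h3split] at hWbud
        nlinarith
      have hDsub : ((insert (col g) D).card : ℝ) + Tsub.card * (4*Bi) ≤ Θ := by
        have h1 : ((insert (col g) D).card : ℝ) ≤ D.card + 1 := by
          exact_mod_cast Finset.card_insert_le _ _
        rw [h3split] at hDbud
        nlinarith
      have hTD : ∀ gg ∈ Tsub, col gg ∉ insert (col g) D := by
        intro gg hgg
        rcases Finset.mem_insert.1 hgg with rfl | hgg
        · rw [hcolg']
          exact hcolfD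
        · rw [Finset.mem_singleton.1 hgg]
          exact hcolh
      obtain ⟨Ps, Qs, hFs, hPscard⟩ := multiFree hM hBi1 hAsubM horc Tsub hTsub
        (insert u W) (insert (col g) D) hWsub hDsub hTD
      obtain ⟨hPsM, hTPs, hPsD, hQscard, hQsM, hQsdisj, hQscolinj, hQsv, hQsc⟩ := hFs
      have hg'Tsub : g' ∈ Tsub := Finset.mem_insert_self g' {h}
      have hhTsub : h ∈ Tsub := Finset.mem_insert_of_mem (Finset.mem_singleton_self h)
      have hg'Ps : g' ∈ Ps := hTPs hg'Tsub
      have hhPs : h ∈ Ps := hTPs hhTsub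
      have hgPs : g ∉ Ps := fun hmem =>
        hPsD g hmem (Finset.mem_insert_self (col g) D)
      have hfQs : f ∉ Qs := by
        intro hmem
        rcases hQsc f hmem with ⟨h1, h2⟩ | ⟨h1, _⟩
        · exact h2 g' hg'Tsub hcolg'.symm
        · exact col_notin_C0 hg'M (hcolg' ▸ h1)
      have hcrossf : ∀ q ∈ Qs, endpts fst snd f ∩ endpts fst snd q = ∅ := by
        intro q hq
        rw [Finset.eq_empty_iff_forall_notMem]
        intro v hv
        rw [Finset.mem_inter] at hv
        rcases mem_endpts_cases htf hv.1 with hvt | hvu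
        · rcases hQsv q hq v hv.2 with ⟨h1, _⟩ | ⟨h1, _⟩
          · obtain ⟨p, hp, hvp⟩ := mem_mVerts.1 h1
            have : p = g := match_unique hM (hPsM hp) hgM hvp (by rw [hvt]; exact htg)
            exact hgPs (this ▸ hp)
          · exact h1 (by rw [hvt]; exact htVM)
        · rcases hQsv q hq v hv.2 with ⟨_, h2⟩ | ⟨h1, _⟩
          · refine h2 h hhTsub ?_
            rw [hvu, ← hudef]
            exact hhd.symm
          · refine h1 ?_
            rw [hvu]
            exact huVM
      refine ⟨insert g Ps, insert f Qs, ⟨?_, ?_, ?_, ?_, ?_, ?_, ?_, ?_, ?_⟩, ?_⟩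
      · exact Finset.insert_subset hgM hPsM
      · intro x hx
        rw [Finset.mem_singleton.1 hx]
        exact Finset.mem_insert_self g Ps
      · intro p hp
        rcases Finset.mem_insert.1 hp with rfl | hp
        · exact hgD
        · exact fun hd => hPsD p hp (Finset.mem_insert_of_mem hd)
      · rw [Finset.card_insert_of_notMem hfQs, Finset.card_insert_of_notMem hgPs, hQscard]
      · intro q hq
        rcases Finset.mem_insert.1 hq with rfl | hq
        · exact hfM
        · exact hQsM q hq
      · intro q hq q' hq' hne
        rcases Finset.mem_insert.1 hq with hqf | hq
        · rcases Finset.mem_insert.1 hq' with hq'f | hq'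
          · exact absurd (hqf.trans hq'f.symm) hne
          · rw [hqf]; exact hcrossf q' hq'
        · rcases Finset.mem_insert.1 hq' with hq'f | hq'
          · rw [hq'f, Finset.inter_comm]; exact hcrossf q hq
          · exact hQsdisj q hq q' hq' hne
      · intro q hq q' hq' hcoleq
        rcases Finset.mem_insert.1 hq with hqf | hq
        · rcases Finset.mem_insert.1 hq' with hq'f | hq'
          · rw [hqf, hq'f]
          · exfalso
            rcases hQsc q' hq' with ⟨h1, h2⟩ | ⟨h1, _⟩
            · exact h2 g' hg'Tsub (by rw [← hcoleq, hqf, hcolg'])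
            · have hcg : col g' ∈ C0 col M := by rw [hcolg', ← hqf, hcoleq]; exact h1
              exact col_notin_C0 hg'M hcg
        · rcases Finset.mem_insert.1 hq' with hq'f | hq'
          · exfalso
            rcases hQsc q hq with ⟨h1, h2⟩ | ⟨h1, _⟩
            · exact h2 g' hg'Tsub (by rw [hcoleq, hq'f, hcolg'])
            · have hcg : col g' ∈ C0 col M := by rw [hcolg', ← hq'f, ← hcoleq]; exact h1
              exact col_notin_C0 hg'M hcg
          · exact hQscolinj q hq q' hq' hcoleq
      · intro q hq v hv
        rcases Finset.mem_insert.1 hq with hqf | hq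
        · rw [hqf] at hv
          rcases mem_endpts_cases htf hv with hvt | hvu
          · refine Or.inl ⟨mem_mVerts.2 ⟨g, Finset.mem_insert_self g Ps, by rw [hvt]; exact htg⟩, ?_⟩
            intro gg hgg
            rw [Finset.mem_singleton.1 hgg, hvt]
            exact fun hc => (hdOf_ne_tl hloop htl g) hc.symm
          · refine Or.inl ⟨?_, ?_⟩
            · refine mem_mVerts.2 ⟨h, Finset.mem_insert_of_mem hhPs, ?_⟩
              rw [hvu, ← hudef, ← hhd]
              exact hdOf_mem_endpts tl h
            · intro gg hgg
              rw [Finset.mem_singleton.1 hgg]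
              intro hveq
              have hvh : v ∈ endpts fst snd h := by
                rw [hvu, ← hudef, ← hhd]
                exact hdOf_mem_endpts tl h
              have hvg : v ∈ endpts fst snd g := hveq ▸ hdOf_mem_endpts tl g
              exact hhg (match_unique hM hhM hgM hvh hvg)
        · rcases hQsv q hq v hv with ⟨h1, h2⟩ | ⟨h1, h2⟩
          · refine Or.inl ⟨Finset.biUnion_subset_biUnion_of_subset_left _
              (Finset.subset_insert g Ps) h1, ?_⟩
            intro gg hgg
            rw [Finset.mem_singleton.1 hgg]
            intro hveq
            obtain ⟨p, hp, hvp⟩ := mem_mVerts.1 h1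
            have hvg : v ∈ endpts fst snd g := hveq ▸ hdOf_mem_endpts tl g
            have : p = g := match_unique hM (hPsM hp) hgM hvp hvg
            exact hgPs (this ▸ hp)
          · exact Or.inr ⟨h1, fun hmem => h2 (Finset.mem_insert_of_mem hmem)⟩
      · intro q hq
        rcases Finset.mem_insert.1 hq with rfl | hq
        · refine Or.inl ⟨?_, ?_⟩
          · rw [← hcolg']
            exact Finset.mem_image_of_mem col (Finset.mem_insert_of_mem hg'Ps)
          · intro gg hgg
            rw [Finset.mem_singleton.1 hgg]
            exact hcolfg
        · rcases hQsc q hq with ⟨h1, h2⟩ | ⟨h1, h2⟩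
          · refine Or.inl ⟨?_, ?_⟩
            · obtain ⟨p, hp, hcolp⟩ := Finset.mem_image.1 h1
              exact hcolp ▸ Finset.mem_image_of_mem col (Finset.mem_insert_of_mem hp)
            · intro gg hgg hcoleq
              rw [Finset.mem_singleton.1 hgg] at hcoleq
              obtain ⟨p, hp, hcolp⟩ := Finset.mem_image.1 h1
              exact hPsD p hp (by rw [hcolp, hcoleq]; exact Finset.mem_insert_self _ _)
          · exact Or.inr ⟨h1, fun hmem => h2 (Finset.mem_insert_of_mem hmem)⟩
      · rw [Finset.card_insert_of_notMem hgPs]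
        push_cast
        have hPs2 : (Ps.card : ℝ) ≤ 2*Bi := by
          have hBi0 : (0:ℝ) ≤ Bi := by linarith
          have h2 := mul_le_mul_of_nonneg_right hTsub2 hBi0
          linarith
        rw [h3split]
        linarith



end SingleFree

/-- Every `R`-edge has an endpoint in `T(V_reach) ∪ (V(M) ∖ V_reach)`. -/
theorem stmt14
    {V E C : Type*} [Fintype V] [DecidableEq V] [Fintype E] [DecidableEq E]
    [Fintype C] [DecidableEq C]
    (ε k α : ℝ) (hε0 : 0 < ε) (hε1 : ε < 1/1000)
    (hk : k = (2:ℝ) ^ (20/ε)) (hα : α = ε/12)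
    (n : ℕ) (hn : (n:ℝ) > k^2)
    (fst snd : E → V) (col : E → C)
    (hloop : ∀ e : E, fst e ≠ snd e)
    (hproper : ∀ e f : E, e ≠ f → (endpts fst snd e ∩ endpts fst snd f).Nonempty →
      col e ≠ col f)
    (hC : Fintype.card C = n)
    (hmult : ∀ u v : V,
      ((Finset.univ.filter fun e : E => endpts fst snd e = ({u, v} : Finset V)).card : ℝ) ≤ n / k)
    (habund : ∀ c : C, (1+ε) * n ≤ ((Finset.univ.filter fun e : E => col e = c).card : ℝ))
    (M : Finset E) (hM : IsRainbowMatching fst snd col M)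
    (hMmax : ∀ S : Finset E, IsRainbowMatching fst snd col S → S.card ≤ M.card)
    (hMlt : (M.card : ℝ) < n - k)
    (tl : E → V) (htl : ∀ e : E, tl e = fst e ∨ tl e = snd e)
    (Es : ℕ → Finset E) (Vs : ℕ → Finset V) (Rs : ℕ → Finset C)
    (hVs : ∀ i, Vs i = (Es i).image (hdOf fst snd tl))
    (hRs : ∀ i, Rs i = (Es i).image col)
    (hE1 : Es 1 = E1 fst snd col M α)
    (htl1 : ∀ e ∈ Es 1,
      α * ((Fcols fst snd col M α).card : ℝ) ≤ (goodDeg fst snd col M α (tl e) : ℝ))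
    (hEi : ∀ i, 2 ≤ i → ∀ e : E,
      e ∈ Es i ↔ e ∈ M ∧ (∀ j ∈ Finset.Ioo 0 i, e ∉ Es j) ∧
        ∃ v ∈ endpts fst snd e, reachCond fst snd col M Vs Rs α i v)
    (htli : ∀ i, 2 ≤ i → ∀ e ∈ Es i, reachCond fst snd col M Vs Rs α i (tl e))
    (m : ℕ) (hm1 : 1 ≤ m)
    (hbig : ∀ i, 1 ≤ i → i ≤ m → α * n ≤ ((Es i).card : ℝ))
    (hstop : ((Es (m+1)).card : ℝ) < α * n)
    :
    ∀ e : E, col e ∈ (Finset.Icc 1 m).biUnion Rs →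
      (endpts fst snd e ∩
        (twins fst snd M ((Finset.Icc 1 m).biUnion Vs) ∪
          (mVerts fst snd M \ (Finset.Icc 1 m).biUnion Vs))).Nonempty := by
  -- preliminary facts
  have hcolinjM : ∀ g ∈ M, ∀ h ∈ M, col g = col h → g = h := hM.2
  have hMn : (M.card : ℝ) ≤ n := by
    have := card_M_le_card_C (C := C) hM
    rw [hC] at this
    exact_mod_cast this
  have hC0k : k ≤ ((C0 col M).card : ℝ) := by
    have := card_C0_eq hM
    rw [hC] at this
    linarith
  have hEsM : ∀ j, 1 ≤ j → Es j ⊆ M := by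
    intro j hj
    rcases eq_or_lt_of_le hj with hj1 | hj2
    · rw [← hj1, hE1, E1]
      exact Finset.filter_subset _ _
    · intro x hx
      exact ((hEi j hj2 x).1 hx).1
  -- m·α ≤ 1
  have hnpos : (0:ℝ) < n := by
    have : (0:ℝ) < k^2 := by
      rw [hk]
      positivity
    linarith
  have hEsdisj : ∀ i ∈ Finset.Icc 1 m, ∀ j ∈ Finset.Icc 1 m, i ≠ j →
      Disjoint (Es i) (Es j) := by
    have hkey : ∀ i j : ℕ, 1 ≤ i → i < j → Disjoint (Es i) (Es j) := by
      intro i j hi hij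
      rw [Finset.disjoint_right]
      intro x hxj hxi
      have hj2 : 2 ≤ j := by omega
      exact ((hEi j hj2 x).1 hxj).2.1 i (Finset.mem_Ioo.2 ⟨by omega, hij⟩) hxi
    intro i hi j hj hne
    rcases lt_or_gt_of_ne hne with h | h
    · exact hkey i j (Finset.mem_Icc.1 hi).1 h
    · exact (hkey j i (Finset.mem_Icc.1 hj).1 h).symm
  have hmα : (m:ℝ) * α ≤ 1 := by
    have hsub : (Finset.Icc 1 m).biUnion Es ⊆ M := by
      intro x hx
      obtain ⟨j, hj, hxj⟩ := Finset.mem_biUnion.1 hx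
      exact hEsM j (Finset.mem_Icc.1 hj).1 hxj
    have hcard : ((Finset.Icc 1 m).biUnion Es).card = ∑ j ∈ Finset.Icc 1 m, (Es j).card :=
      Finset.card_biUnion hEsdisj
    have hsum : (m:ℝ) * (α * n) ≤ ∑ j ∈ Finset.Icc 1 m, ((Es j).card : ℝ) := by
      have h1 : ∀ j ∈ Finset.Icc 1 m, α * (n:ℝ) ≤ ((Es j).card : ℝ) := by
        intro j hj
        exact hbig j (Finset.mem_Icc.1 hj).1 (Finset.mem_Icc.1 hj).2
      have h2 := Finset.card_nsmul_le_sum (Finset.Icc 1 m)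
        (fun j => ((Es j).card : ℝ)) (α * n) h1
      rw [nsmul_eq_mul, Nat.card_Icc] at h2
      simpa using h2
    have hle : (∑ j ∈ Finset.Icc 1 m, ((Es j).card : ℝ)) ≤ (M.card : ℝ) := by
      rw [← Nat.cast_sum, ← hcard]
      exact_mod_cast Finset.card_le_card hsub
    have hα0 : 0 < α := by rw [hα]; linarith
    have : (m:ℝ) * (α * n) ≤ n := by linarith
    by_contra hcon
    push_neg at hcon
    have := mul_lt_mul_of_pos_right hcon hnpos
    nlinarith
  obtain ⟨hαpos, hα1, hkpos, hk1, hkn, hnk1, hknk, hα2k, hα2n, hnum7, hnum8, hnum9, hnum10⟩ :=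
    numFacts ε k α hε0 hε1 hk hα n hn m hmα
  have hnk0 : 0 ≤ (n:ℝ)/k := by positivity
  -- |Rs j| and |F|
  have hRcard : ∀ j, 1 ≤ j → j ≤ m → α*(n:ℝ) ≤ ((Rs j).card : ℝ) := by
    intro j hj1 hjm
    have h1 : (Rs j).card = (Es j).card := by
      rw [hRs j]
      exact Finset.card_image_of_injOn (fun a ha b hb hab =>
        hM.2 a (hEsM j hj1 ha) b (hEsM j hj1 hb) hab)
    rw [h1]
    exact hbig j hj1 hjm
  have hF5 : 5*α*(n:ℝ) ≤ ((Fcols fst snd col M α).card : ℝ) := by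
    have h1 : (Fcols fst snd col M α).card = (E0 fst snd col M α).card := by
      rw [Fcols, mCols]
      refine Finset.card_image_of_injOn (fun a ha b hb hab => ?_)
      have haM : a ∈ M := Finset.filter_subset _ _ ha
      have hbM : b ∈ M := Finset.filter_subset _ _ hb
      exact hM.2 a haM b hbM hab
    rw [h1]
    exact E0_large hloop hproper hC habund hM hMmax hMlt (by rw [hα]; ring) hαpos hk1
  have hF5α : 5*(α^2*(n:ℝ)) ≤ α * ((Fcols fst snd col M α).card : ℝ) := by
    have := mul_le_mul_of_nonneg_left hF5 hαpos.le
    nlinarith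
  -- the single freeing oracle
  have SF := singleFree k α (α^3*k/100) n fst snd col hloop hproper hC hmult M hM tl htl
    Es Vs Rs hVs hRs hE1 htl1 htli m hEsM hRcard hF5α hC0k hαpos hkpos hnk0 hnum7 hnum9 hnum10
  -- main argument
  intro e he
  by_contra hcon
  rw [Finset.not_nonempty_iff_eq_empty, Finset.eq_empty_iff_forall_notMem] at hcon
  have hkey : ∀ v ∈ endpts fst snd e, v ∈ mVerts fst snd M →
      v ∈ (Finset.Icc 1 m).biUnion Vs := by
    intro v hv hvM
    by_contra hvr
    refine hcon v (Finset.mem_inter.2 ⟨hv, Finset.mem_union_right _ ?_⟩)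
    exact Finset.mem_sdiff.2 ⟨hvM, hvr⟩
  have hhead : ∀ v ∈ endpts fst snd e, v ∈ mVerts fst snd M →
      ∃ j ∈ Finset.Icc 1 m, ∃ h ∈ Es j, hdOf fst snd tl h = v := by
    intro v hv hvM
    obtain ⟨j, hj, hvj⟩ := Finset.mem_biUnion.1 (hkey v hv hvM)
    rw [hVs j] at hvj
    obtain ⟨h, hh, hhd⟩ := Finset.mem_image.1 hvj
    exact ⟨j, hj, h, hh, hhd⟩
  -- e is not a matching edge
  have heM : e ∉ M := by
    intro heM
    have htle : tl e ∈ endpts fst snd e := tl_mem_endpts htl e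
    obtain ⟨j, hj, h, hh, hhd⟩ := hhead (tl e) htle (endpts_subset_mVerts heM htle)
    have hhM : h ∈ M := hEsM j (Finset.mem_Icc.1 hj).1 hh
    have : h = e := match_unique hM hhM heM (hhd ▸ hdOf_mem_endpts tl h) htle
    exact (hdOf_ne_tl hloop htl e) (this ▸ hhd)
  -- the colour witness
  obtain ⟨i₀, hi₀, hcolRs⟩ := Finset.mem_biUnion.1 he
  rw [hRs i₀] at hcolRs
  obtain ⟨gc, hgcEs, hgccol⟩ := Finset.mem_image.1 hcolRs
  have hi₀1 : 1 ≤ i₀ := (Finset.mem_Icc.1 hi₀).1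
  have hgcM : gc ∈ M := hEsM i₀ hi₀1 hgcEs
  -- targets
  set Te := M.filter (fun h => hdOf fst snd tl h ∈ endpts fst snd e) with hTedef
  set T := insert gc Te with hTdef
  have hTA : T ⊆ (Finset.Icc 1 m).biUnion Es := by
    intro x hx
    rcases Finset.mem_insert.1 hx with rfl | hx
    · exact Finset.mem_biUnion.2 ⟨i₀, hi₀, hgcEs⟩
    · rw [hTedef, Finset.mem_filter] at hx
      obtain ⟨j, hj, h, hh, hhd⟩ := hhead (hdOf fst snd tl x) hx.2
        (endpts_subset_mVerts hx.1 (hdOf_mem_endpts tl x))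
      have hhM : h ∈ M := hEsM j (Finset.mem_Icc.1 hj).1 hh
      have : h = x := match_unique hM hhM hx.1 (hhd ▸ hdOf_mem_endpts tl h)
        (hdOf_mem_endpts tl x)
      exact Finset.mem_biUnion.2 ⟨j, hj, this ▸ hh⟩
  have hTecard : Te.card ≤ 2 := by
    refine le_trans (Finset.card_le_card_of_injOn (hdOf fst snd tl) ?_ ?_)
      (endpts_card_le fst snd e)
    · intro h hh
      rw [hTedef] at hh
      exact (Finset.mem_filter.1 hh).2
    · intro h1 hh1 h2 hh2 heq
      simp only [hTedef, Finset.coe_filter, Set.mem_setOf_eq] at hh1 hh2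
      exact match_unique hM hh1.1 hh2.1 (hdOf_mem_endpts tl h1)
        (heq ▸ hdOf_mem_endpts tl h2)
  have hTcard : (T.card : ℝ) ≤ 3 := by
    have : T.card ≤ Te.card + 1 := Finset.card_insert_le _ _
    have h2 : T.card ≤ 3 := by omega
    exact_mod_cast h2
  -- the oracle for multiFree
  have h3m1 : (1:ℝ) ≤ (3:ℝ)^m := by
    have := pow_le_pow_left₀ (by norm_num : (0:ℝ) ≤ 1) (by norm_num : (1:ℝ) ≤ 3) m
    simpa using this
  have hA_M : (Finset.Icc 1 m).biUnion Es ⊆ M := by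
    intro x hx
    obtain ⟨j, hj, hxj⟩ := Finset.mem_biUnion.1 hx
    exact hEsM j (Finset.mem_Icc.1 hj).1 hxj
  have horc : ∀ gg ∈ (Finset.Icc 1 m).biUnion Es, ∀ (W' : Finset V) (D' : Finset C),
      (W'.card : ℝ) + 3*(3:ℝ)^m ≤ α^3*k/100 → (D'.card : ℝ) + 3*(3:ℝ)^m ≤ α^3*k/100 →
      col gg ∉ D' → ∃ P Q, FreeOut fst snd col M tl W' D' {gg} P Q ∧ (P.card : ℝ) ≤ (3:ℝ)^m := by
    intro gg hgg W' D' hW' hD' hcolgg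
    obtain ⟨j, hj, hggEs⟩ := Finset.mem_biUnion.1 hgg
    have hj1 : 1 ≤ j := (Finset.mem_Icc.1 hj).1
    have hjm : j ≤ m := (Finset.mem_Icc.1 hj).2
    have hpow : (3:ℝ)^j ≤ (3:ℝ)^m :=
      pow_le_pow_right₀ (by norm_num : (1:ℝ) ≤ 3) hjm
    obtain ⟨P, Q, hF, hcard⟩ := SF j hj1 hjm gg hggEs W' D' (by linarith) (by linarith) hcolgg
    exact ⟨P, Q, hF, le_trans hcard hpow⟩
  -- apply multiFree
  have hWbud : ((endpts fst snd e).card : ℝ) + T.card * (4*(3:ℝ)^m) ≤ α^3*k/100 := by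
    have h1 : ((endpts fst snd e).card : ℝ) ≤ 2 := by
      exact_mod_cast endpts_card_le fst snd e
    have h2 : (T.card:ℝ) * (4*(3:ℝ)^m) ≤ 3 * (4*(3:ℝ)^m) :=
      mul_le_mul_of_nonneg_right hTcard (by positivity)
    linarith [hnum8]
  have hDbud : ((∅ : Finset C).card : ℝ) + T.card * (4*(3:ℝ)^m) ≤ α^3*k/100 := by
    have h2 : (T.card:ℝ) * (4*(3:ℝ)^m) ≤ 3 * (4*(3:ℝ)^m) :=
      mul_le_mul_of_nonneg_right hTcard (by positivity)
    have h0 : ((∅ : Finset C).card : ℝ) = 0 := by simp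
    linarith [hnum8]
  obtain ⟨P, Q, hFO, -⟩ := multiFree hM h3m1 hA_M horc T hTA (endpts fst snd e) ∅
    hWbud hDbud (by intro gg _; exact Finset.notMem_empty _)
  obtain ⟨hPM, hTP, hPD, hQcard, hQM, hQdisj, hQcolinj, hQv, hQc⟩ := hFO
  have hgcT : gc ∈ T := Finset.mem_insert_self _ _
  have hgcP : gc ∈ P := hTP hgcT
  -- the new rainbow matching
  set S := insert e ((M \ P) ∪ Q) with hSdef
  have hePQ : e ∉ (M \ P) ∪ Q := by
    intro hmem
    rcases Finset.mem_union.1 hmem with h | h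
    · exact heM (Finset.mem_sdiff.1 h).1
    · rcases hQc e h with ⟨h1, h2⟩ | ⟨h1, -⟩
      · exact h2 gc hgcT hgccol.symm
      · exact col_notin_C0 hgcM (hgccol ▸ h1)
  have hQdisjM : ∀ q ∈ Q, ∀ h ∈ M \ P, endpts fst snd q ∩ endpts fst snd h = ∅ := by
    intro q hq h hh
    rw [Finset.mem_sdiff] at hh
    rw [Finset.eq_empty_iff_forall_notMem]
    intro v hv
    rw [Finset.mem_inter] at hv
    rcases hQv q hq v hv.1 with ⟨h1, -⟩ | ⟨h1, -⟩
    · obtain ⟨p, hp, hvp⟩ := mem_mVerts.1 h1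
      have : p = h := match_unique hM (hPM hp) hh.1 hvp hv.2
      exact hh.2 (this ▸ hp)
    · exact h1 (endpts_subset_mVerts hh.1 hv.2)
  have he_disj : ∀ h' ∈ (M \ P) ∪ Q, endpts fst snd e ∩ endpts fst snd h' = ∅ := by
    intro h' hh'
    rw [Finset.eq_empty_iff_forall_notMem]
    intro v hv
    rw [Finset.mem_inter] at hv
    rcases Finset.mem_union.1 hh' with h | h
    · rw [Finset.mem_sdiff] at h
      obtain ⟨j, hj, hh, hhEs, hhd⟩ := hhead v hv.1 (endpts_subset_mVerts h.1 hv.2)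
      have hhM : hh ∈ M := hEsM j (Finset.mem_Icc.1 hj).1 hhEs
      have hhh' : hh = h' := match_unique hM hhM h.1 (hhd ▸ hdOf_mem_endpts tl hh) hv.2
      have : hh ∈ Te := Finset.mem_filter.2 ⟨hhM, by rw [hhd]; exact hv.1⟩
      exact h.2 (hhh' ▸ hTP (Finset.mem_insert_of_mem this))
    · rcases hQv h' h v hv.2 with ⟨h1, h2⟩ | ⟨-, h2⟩
      · obtain ⟨p, hp, hvp⟩ := mem_mVerts.1 h1
        obtain ⟨j, hj, hh, hhEs, hhd⟩ := hhead v hv.1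
          (endpts_subset_mVerts (hPM hp) hvp)
        have hhM : hh ∈ M := hEsM j (Finset.mem_Icc.1 hj).1 hhEs
        have hhT : hh ∈ T := Finset.mem_insert_of_mem
          (Finset.mem_filter.2 ⟨hhM, by rw [hhd]; exact hv.1⟩)
        exact h2 hh hhT hhd.symm
      · exact h2 hv.1
  have hQnotMcol : ∀ q ∈ Q, ∀ h ∈ M \ P, col q ≠ col h := by
    intro q hq h hh hcoleq
    rw [Finset.mem_sdiff] at hh
    rcases hQc q hq with ⟨h1, -⟩ | ⟨h1, -⟩
    · obtain ⟨p, hp, hcolp⟩ := Finset.mem_image.1 h1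
      have : p = h := hM.2 p (hPM hp) h hh.1 (hcolp.trans hcoleq)
      exact hh.2 (this ▸ hp)
    · have hcq : col h ∈ C0 col M := by rw [← hcoleq]; exact h1
      exact col_notin_C0 hh.1 hcq
  have he_col : ∀ h' ∈ (M \ P) ∪ Q, col e ≠ col h' := by
    intro h' hh' hcoleq
    rcases Finset.mem_union.1 hh' with h | h
    · rw [Finset.mem_sdiff] at h
      have : gc = h' := hM.2 gc hgcM h' h.1 (hgccol.trans hcoleq)
      exact h.2 (this ▸ hgcP)
    · rcases hQc h' h with ⟨h1, h2⟩ | ⟨h1, -⟩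
      · exact h2 gc hgcT (by rw [← hcoleq, hgccol])
      · have hcq : col gc ∈ C0 col M := by rw [hgccol, hcoleq]; exact h1
        exact col_notin_C0 hgcM hcq
  have hrainbow : IsRainbowMatching fst snd col S := by
    constructor
    · intro a ha b hb hne
      rw [hSdef, Finset.mem_insert] at ha hb
      rcases ha with rfl | ha
      · rcases hb with rfl | hb
        · exact absurd rfl hne
        · exact he_disj b hb
      · rcases hb with rfl | hb
        · rw [Finset.inter_comm]
          exact he_disj a ha
        · rcases Finset.mem_union.1 ha with ha' | ha' <;>
            rcases Finset.mem_union.1 hb with hb' | hb'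
          · exact hM.1 a (Finset.mem_sdiff.1 ha').1 b (Finset.mem_sdiff.1 hb').1 hne
          · rw [Finset.inter_comm]
            exact hQdisjM b hb' a ha'
          · exact hQdisjM a ha' b hb'
          · exact hQdisj a ha' b hb' hne
    · intro a ha b hb hcoleq
      rw [hSdef, Finset.mem_insert] at ha hb
      rcases ha with rfl | ha
      · rcases hb with rfl | hb
        · rfl
        · exact absurd hcoleq (he_col b hb)
      · rcases hb with rfl | hb
        · exact absurd hcoleq.symm (he_col a ha)
        · rcases Finset.mem_union.1 ha with ha' | ha' <;>
            rcases Finset.mem_union.1 hb with hb' | hb'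
          · exact hM.2 a (Finset.mem_sdiff.1 ha').1 b (Finset.mem_sdiff.1 hb').1 hcoleq
          · exact absurd hcoleq.symm (hQnotMcol b hb' a ha')
          · exact absurd hcoleq (hQnotMcol a ha' b hb')
          · exact hQcolinj a ha' b hb' hcoleq
  -- cardinality contradiction
  have hQMP : Disjoint (M \ P) Q := by
    rw [Finset.disjoint_right]
    intro q hq hq'
    exact hQM q hq (Finset.mem_sdiff.1 hq').1
  have hScard : S.card = M.card + 1 := by
    rw [hSdef, Finset.card_insert_of_notMem hePQ,
      Finset.card_union_of_disjoint hQMP, Finset.card_sdiff_of_subset hPM, hQcard]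
    have := Finset.card_le_card hPM
    omega
  have := hMmax S hrainbow
  omega
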